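/- arXiv:1107.4726 — 5 statements merged into one kernel-verified Lean document; each statement's English description precedes it below -/
import Mathlib

section
/- Let (X,𝒰) be a complete Hausdorff uniform space, ≤ a partial ordering on X, and φ : X → L̄⁰(𝓕) a proper function bounded from below such that x ≤ y implies φ(y) ≤ φ(x). Then for each totally ordered subset M of X with φ(M) ⊆ L⁰(𝓕), the net {φ(m) : m ∈ M} (indexed by the directed set M) is a Cauchy net with respect to the d_{ε,λ}-uniformity on L⁰(𝓕), i.e. the uniformity of convergence in probability P. -/
open MeasureTheory ENNReal Set Filter

namespace GYY

variable {Ω : Type*} [MeasurableSpace Ω]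

/-- `L⁰(𝓕)`: equivalence classes of real-valued random variables on `(Ω,𝓕,P)`. -/
abbrev L0 (P : Measure Ω) := Ω →ₘ[P] ℝ

/-- `L̄⁰(𝓕)`: equivalence classes of extended-real-valued random variables. -/
abbrev L0e (P : Measure Ω) := Ω →ₘ[P] EReal

/-- `L⁰₊₊(𝓕)`: the (classes of) random variables that are strictly positive a.s. -/
def L0pp (P : Measure Ω) : Set (L0 P) := {ε | ∀ᵐ ω ∂P, 0 < ε ω}

/-- The equivalence class `Ĩ_A` of the indicator function of a measurable set `A`. -/
noncomputable def indL0 (P : Measure Ω) (A : Set Ω) (hA : MeasurableSet A) : L0 P :=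
  AEEqFun.mk (A.indicator fun _ => (1 : ℝ)) (aestronglyMeasurable_const.indicator hA)

/-- A random metric space (RM space) with base `(Ω,𝓕,P)`. -/
structure RMSpace (P : Measure Ω) (E : Type*) where
  d : E → E → L0 P
  d_nonneg : ∀ p q, ∀ᵐ ω ∂P, 0 ≤ d p q ω
  d_eq_zero_iff : ∀ p q, d p q = 0 ↔ p = q
  d_symm : ∀ p q, d p q = d q p
  d_triangle : ∀ p q r, ∀ᵐ ω ∂P, d p r ω ≤ d p q ω + d q r ω

/-- Convergence in probability `P` of a sequence in `L⁰(𝓕)`, i.e. convergence in the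
`(ε,λ)`-topology of `L⁰(𝓕)` with the random metric `d(p,q) = |p - q|`. -/
def TendstoProb (P : Measure Ω) (r : ℕ → L0 P) (s : L0 P) : Prop :=
  ∀ ε : ℝ, 0 < ε → ∀ lam ∈ Ioo (0 : ℝ) 1, ∃ N : ℕ, ∀ n ≥ N,
    ENNReal.ofReal (1 - lam) < P {ω | |r n ω - s ω| < ε}

namespace RMSpace

variable {P : Measure Ω} {E : Type*} (M : RMSpace P E)

/-- Convergence of a sequence in the `(ε,λ)`-topology of an RM space. -/
def TendstoEL (x : ℕ → E) (a : E) : Prop :=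
  ∀ ε : ℝ, 0 < ε → ∀ lam ∈ Ioo (0 : ℝ) 1, ∃ N : ℕ, ∀ n ≥ N,
    ENNReal.ofReal (1 - lam) < P {ω | M.d (x n) a ω < ε}

/-- Cauchy sequence for the `d_{ε,λ}`-uniformity of an RM space. -/
def CauchySeqEL (x : ℕ → E) : Prop :=
  ∀ ε : ℝ, 0 < ε → ∀ lam ∈ Ioo (0 : ℝ) 1, ∃ N : ℕ, ∀ m ≥ N, ∀ n ≥ N,
    ENNReal.ofReal (1 - lam) < P {ω | M.d (x m) (x n) ω < ε}

/-- `d_{ε,λ}`-completeness of an RM space (the `d_{ε,λ}`-uniformity is metrizable, hence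
completeness is equivalent to sequential completeness). -/
def CompleteEL : Prop := ∀ x : ℕ → E, M.CauchySeqEL x → ∃ a, M.TendstoEL x a

/-- `φ : E → L̄⁰(𝓕)` is `𝒯_{ε,λ}`-lower semicontinuous: its epigraph
`epi(φ) = {(x,r) ∈ E × L⁰ : φ(x) ≤ r}` is closed in
`(E,𝒯_{ε,λ}) × (L⁰(𝓕),𝒯_{ε,λ})` (sequentially; both topologies are metrizable). -/
def LscEL (φ : E → L0e P) : Prop :=
  ∀ (x : ℕ → E) (r : ℕ → L0 P) (a : E) (s : L0 P),
    (∀ n, ∀ᵐ ω ∂P, φ (x n) ω ≤ (r n ω : EReal)) →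
    M.TendstoEL x a → TendstoProb P r s →
    ∀ᵐ ω ∂P, φ a ω ≤ (s ω : EReal)

end RMSpace

/-- `φ` is proper on `G`: `φ(x) > -∞` a.s. for every `x ∈ G`, and `φ(x) < +∞` a.s.
for some `x ∈ G`. -/
def ProperOn {E : Type*} {P : Measure Ω} (φ : E → L0e P) (G : Set E) : Prop :=
  (∀ x ∈ G, ∀ᵐ ω ∂P, ⊥ < φ x ω) ∧ ∃ x ∈ G, ∀ᵐ ω ∂P, φ x ω < ⊤

/-- `φ` is bounded from below on `G` by an element of `L⁰(𝓕)`. -/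
def BddBelowOn {E : Type*} {P : Measure Ω} (φ : E → L0e P) (G : Set E) : Prop :=
  ∃ ξ : L0 P, ∀ x ∈ G, ∀ᵐ ω ∂P, (ξ ω : EReal) ≤ φ x ω

/-- `φ` is bounded from above on `G` by an element of `L⁰(𝓕)`. -/
def BddAboveOn {E : Type*} {P : Measure Ω} (φ : E → L0e P) (G : Set E) : Prop :=
  ∃ ξ : L0 P, ∀ x ∈ G, ∀ᵐ ω ∂P, φ x ω ≤ (ξ ω : EReal)

/-- `η = ⋀ φ(G)`, the infimum of `φ(G)` in the complete lattice `L̄⁰(𝓕)`. -/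
def IsInfOn {E : Type*} {P : Measure Ω} (φ : E → L0e P) (G : Set E) (η : L0e P) : Prop :=
  (∀ x ∈ G, ∀ᵐ ω ∂P, η ω ≤ φ x ω) ∧
    ∀ ζ : L0e P, (∀ x ∈ G, ∀ᵐ ω ∂P, ζ ω ≤ φ x ω) → ∀ᵐ ω ∂P, ζ ω ≤ η ω

/-- `η = ⋁ φ(G)`, the supremum of `φ(G)` in the complete lattice `L̄⁰(𝓕)`. -/
def IsSupOn {E : Type*} {P : Measure Ω} (φ : E → L0e P) (G : Set E) (η : L0e P) : Prop :=
  (∀ x ∈ G, ∀ᵐ ω ∂P, φ x ω ≤ η ω) ∧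
    ∀ ζ : L0e P, (∀ x ∈ G, ∀ᵐ ω ∂P, φ x ω ≤ ζ ω) → ∀ᵐ ω ∂P, η ω ≤ ζ ω

/-- `s = ⋁ g(G)` for an `L⁰(𝓕)`-valued function `g`. -/
def IsSupOnR {E : Type*} {P : Measure Ω} (g : E → L0 P) (G : Set E) (s : L0 P) : Prop :=
  (∀ x ∈ G, ∀ᵐ ω ∂P, g x ω ≤ s ω) ∧
    ∀ c : L0 P, (∀ x ∈ G, ∀ᵐ ω ∂P, g x ω ≤ c ω) → ∀ᵐ ω ∂P, s ω ≤ c ω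

/-- The Cauchy property (for the `d_{ε,λ}`-uniformity of `L⁰(𝓕)`, i.e. the uniformity of
convergence in probability) of the net `{φ(m) : m ∈ M}` indexed by `M` directed by the
order of `X`. -/
def CauchyNetProb {X : Type*} [Preorder X] {P : Measure Ω} (φ : X → L0e P) (M : Set X) : Prop :=
  ∀ ε : ℝ, 0 < ε → ∀ lam ∈ Ioo (0 : ℝ) 1, ∃ m₀ ∈ M, ∀ m₁ ∈ M, ∀ m₂ ∈ M,
    m₀ ≤ m₁ → m₀ ≤ m₂ →
      ENNReal.ofReal (1 - lam) < P {ω | |(φ m₁ ω).toReal - (φ m₂ ω).toReal| < ε}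

/-- The section filter of the net `{x_g : g ∈ G}`, `x_g = g`, indexed by `G` directed by the
order of `X`; the net is Cauchy iff this filter is a Cauchy filter. -/
def netFilter {X : Type*} [Preorder X] (G : Set X) : Filter X :=
  ⨅ g ∈ G, 𝓟 {y | y ∈ G ∧ g ≤ y}

/-- A random normed module (RN module) over `ℝ` with base `(Ω,𝓕,P)`: a left module `E`
over the algebra `L⁰(𝓕)` together with an `L⁰`-norm. -/
structure RNModule (P : Measure Ω) (E : Type*) [AddCommGroup E] where
  smul : L0 P → E → E
  one_smul : ∀ x, smul 1 x = x
  mul_smul : ∀ ξ η x, smul (ξ * η) x = smul ξ (smul η x)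
  smul_add : ∀ ξ x y, smul ξ (x + y) = smul ξ x + smul ξ y
  add_smul : ∀ ξ η x, smul (ξ + η) x = smul ξ x + smul η x
  nm : E → L0 P
  nm_nonneg : ∀ x, ∀ᵐ ω ∂P, 0 ≤ nm x ω
  nm_eq_zero_iff : ∀ x, nm x = 0 ↔ x = 0
  nm_smul : ∀ ξ x, ∀ᵐ ω ∂P, nm (smul ξ x) ω = |ξ ω| * nm x ω
  nm_add_le : ∀ x y, ∀ᵐ ω ∂P, nm (x + y) ω ≤ nm x ω + nm y ω

/-- The `𝒯_c`-neighbourhood filter of a point `r` of `L⁰(𝓕)`, with base the closed balls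
`{s : |s - r| ≤ ε}`, `ε ∈ L⁰₊₊`. -/
def cNhdsL0 (P : Measure Ω) (r : L0 P) : Filter (L0 P) :=
  ⨅ ε ∈ L0pp P, 𝓟 {s | ∀ᵐ ω ∂P, |s ω - r ω| ≤ ε ω}

namespace RNModule

variable {P : Measure Ω} {E : Type*} [AddCommGroup E] (N : RNModule P E)

/-- Convergence of sequences in the `(ε,λ)`-topology `𝒯_{ε,λ}` of an RN module. -/
def TendstoEL (x : ℕ → E) (a : E) : Prop :=
  ∀ ε : ℝ, 0 < ε → ∀ lam ∈ Ioo (0 : ℝ) 1, ∃ N' : ℕ, ∀ n ≥ N',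
    ENNReal.ofReal (1 - lam) < P {ω | N.nm (x n - a) ω < ε}

/-- Cauchy sequence for the `d_{ε,λ}`-uniformity of an RN module. -/
def CauchySeqEL (x : ℕ → E) : Prop :=
  ∀ ε : ℝ, 0 < ε → ∀ lam ∈ Ioo (0 : ℝ) 1, ∃ N' : ℕ, ∀ m ≥ N', ∀ n ≥ N',
    ENNReal.ofReal (1 - lam) < P {ω | N.nm (x m - x n) ω < ε}

/-- `𝒯_{ε,λ}`-completeness (the `d_{ε,λ}`-uniformity is metrizable, hence completeness is
equivalent to sequential completeness). -/
def CompleteEL : Prop := ∀ x : ℕ → E, N.CauchySeqEL x → ∃ a, N.TendstoEL x a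

/-- `G` is `𝒯_{ε,λ}`-closed (sequentially; `𝒯_{ε,λ}` is metrizable). -/
def ClosedEL (G : Set E) : Prop :=
  ∀ (x : ℕ → E) (a : E), (∀ n, x n ∈ G) → N.TendstoEL x a → a ∈ G

/-- `φ : G → L̄⁰(𝓕)` is `𝒯_{ε,λ}`-lower semicontinuous on `G`: its epigraph
`{(x,r) ∈ G × L⁰ : φ(x) ≤ r}` is closed in `(G,𝒯_{ε,λ}) × (L⁰(𝓕),𝒯_{ε,λ})`. -/
def LscELOn (φ : E → L0e P) (G : Set E) : Prop :=
  ∀ (x : ℕ → E) (r : ℕ → L0 P) (a : E) (s : L0 P),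
    (∀ n, x n ∈ G) → a ∈ G →
    (∀ n, ∀ᵐ ω ∂P, φ (x n) ω ≤ (r n ω : EReal)) →
    N.TendstoEL x a → TendstoProb P r s →
    ∀ᵐ ω ∂P, φ a ω ≤ (s ω : EReal)

/-- The neighbourhood filter of `x` in the locally `L⁰`-convex topology `𝒯_c`,
whose base consists of the closed balls `{y : ‖y - x‖ ≤ ε}`, `ε ∈ L⁰₊₊`. -/
def cNhds (x : E) : Filter E :=
  ⨅ ε ∈ L0pp P, 𝓟 {y | ∀ᵐ ω ∂P, N.nm (y - x) ω ≤ ε ω}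

/-- The `d_c`-uniformity of an RN module, with base `{U(ε) : ε ∈ L⁰₊₊}`,
`U(ε) = {(p,q) : ‖p - q‖ ≤ ε}`. -/
def cUniformity : Filter (E × E) :=
  ⨅ ε ∈ L0pp P, 𝓟 {p | ∀ᵐ ω ∂P, N.nm (p.1 - p.2) ω ≤ ε ω}

/-- `𝒯_c`-completeness: every Cauchy filter for the `d_c`-uniformity converges. -/
def cComplete : Prop :=
  ∀ F : Filter E, F.NeBot → F ×ˢ F ≤ N.cUniformity → ∃ x, F ≤ N.cNhds x

/-- The `𝒯_c`-closure of a subset. -/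
def cClosure (G : Set E) : Set E := {x | (N.cNhds x ⊓ 𝓟 G).NeBot}

/-- `G` is `𝒯_c`-closed. -/
def cClosed (G : Set E) : Prop := ∀ x, x ∈ N.cClosure G → x ∈ G

/-- `S` is `𝒯_c`-dense in `T`. -/
def cDenseIn (S T : Set E) : Prop := ∀ x ∈ T, x ∈ N.cClosure S

/-- The `𝒯_c`-boundary `∂_c G`. -/
def cBoundary (G : Set E) : Set E := N.cClosure G ∩ N.cClosure Gᶜ

/-- `φ : G → L̄⁰(𝓕)` is `𝒯_c`-lower semicontinuous on `G`: its epigraph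
`{(x,r) ∈ G × L⁰ : φ(x) ≤ r}` is closed in `(G,𝒯_c) × (L⁰(𝓕),𝒯_c)`. -/
def cLscOn (φ : E → L0e P) (G : Set E) : Prop :=
  ∀ (a : E) (s : L0 P), a ∈ G →
    ((N.cNhds a ×ˢ cNhdsL0 P s) ⊓
      𝓟 {p : E × L0 P | p.1 ∈ G ∧ ∀ᵐ ω ∂P, φ p.1 ω ≤ (p.2 ω : EReal)}).NeBot →
    ∀ᵐ ω ∂P, φ a ω ≤ (s ω : EReal)

/-- The countable concatenation property of a subset `G` of an RN module. -/
def HasCC (G : Set E) : Prop :=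
  ∀ (x : ℕ → E), (∀ n, x n ∈ G) →
    ∀ (A : ℕ → Set Ω) (hA : ∀ n, MeasurableSet (A n)),
      (∀ i j, i ≠ j → Disjoint (A i) (A j)) → (⋃ n, A n) = univ →
        ∃ y ∈ G, ∀ n, N.smul (indL0 P (A n) (hA n)) y = N.smul (indL0 P (A n) (hA n)) (x n)

/-- The countable concatenation property of a subset of the product `L⁰(𝓕)`-module
`E × L⁰(𝓕)` (with componentwise module operations). -/
def HasCCProd (G : Set (E × L0 P)) : Prop :=
  ∀ (p : ℕ → E × L0 P), (∀ n, p n ∈ G) →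
    ∀ (A : ℕ → Set Ω) (hA : ∀ n, MeasurableSet (A n)),
      (∀ i j, i ≠ j → Disjoint (A i) (A j)) → (⋃ n, A n) = univ →
        ∃ q ∈ G, ∀ n,
          N.smul (indL0 P (A n) (hA n)) q.1 = N.smul (indL0 P (A n) (hA n)) (p n).1 ∧
          indL0 P (A n) (hA n) * q.2 = indL0 P (A n) (hA n) * (p n).2

/-- The local property of an `L̄⁰(𝓕)`-valued function:
`Ĩ_A·φ(x) = Ĩ_A·φ(Ĩ_A·x)` for all `x ∈ E`, `A ∈ 𝓕`, i.e. `φ(x) = φ(Ĩ_A x)` a.s. on `A`. -/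
def LocalProp (φ : E → L0e P) : Prop :=
  ∀ (x : E) (A : Set Ω) (hA : MeasurableSet A),
    ∀ᵐ ω ∂P, ω ∈ A → φ x ω = φ (N.smul (indL0 P A hA) x) ω

/-- `G` is `L⁰(𝓕)`-convex. -/
def L0Convex (G : Set E) : Prop :=
  ∀ x ∈ G, ∀ y ∈ G, ∀ ξ η : L0 P,
    (∀ᵐ ω ∂P, 0 ≤ ξ ω) → (∀ᵐ ω ∂P, 0 ≤ η ω) → ξ + η = 1 →
      N.smul ξ x + N.smul η y ∈ G

/-- `G` is a.s. bounded: `⋁{‖p‖ : p ∈ G} ∈ L⁰₊(𝓕)`. -/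
def ASBounded (G : Set E) : Prop :=
  ∃ ξ : L0 P, ∀ p ∈ G, ∀ᵐ ω ∂P, N.nm p ω ≤ ξ ω

/-- Membership in the random conjugate space `E*`: `f` is an a.s. bounded random linear
functional, i.e. an `L⁰(𝓕)`-linear map `f : E → L⁰(𝓕)` with `|f(x)| ≤ ξ·‖x‖` for all `x`
for some `ξ ∈ L⁰₊(𝓕)`. -/
def IsDual (f : E → L0 P) : Prop :=
  (∀ x y, f (x + y) = f x + f y) ∧
  (∀ (ξ : L0 P) (x : E), f (N.smul ξ x) = ξ * f x) ∧
  ∃ ξ : L0 P, (∀ᵐ ω ∂P, 0 ≤ ξ ω) ∧ ∀ x, ∀ᵐ ω ∂P, |f x ω| ≤ ξ ω * N.nm x ω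

/-- `nf = ‖f‖* := ⋀{ξ ∈ L⁰₊ : |f(x)| ≤ ξ‖x‖ for all x ∈ E}`, the random norm of `E*`. -/
def IsDualNorm (f : E → L0 P) (nf : L0 P) : Prop :=
  (∀ ξ : L0 P, ((∀ᵐ ω ∂P, 0 ≤ ξ ω) ∧ ∀ x, ∀ᵐ ω ∂P, |f x ω| ≤ ξ ω * N.nm x ω) →
    ∀ᵐ ω ∂P, nf ω ≤ ξ ω) ∧
  (∀ c : L0 P,
    (∀ ξ : L0 P, ((∀ᵐ ω ∂P, 0 ≤ ξ ω) ∧ ∀ x, ∀ᵐ ω ∂P, |f x ω| ≤ ξ ω * N.nm x ω) →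
      ∀ᵐ ω ∂P, c ω ≤ ξ ω) → ∀ᵐ ω ∂P, c ω ≤ nf ω)

/-- The cone `K(f,k) = {y ∈ E : k‖y‖ ≤ f(y)}`. -/
def Kcone (f : E → L0 P) (k : L0 P) : Set E := {y | ∀ᵐ ω ∂P, k ω * N.nm y ω ≤ f y ω}

/-- `f ∈ E*∖{0}`, bounded from above on `G`, supports `G` at some point:
`f(x) = ⋁f(G)` for some `x ∈ G`. -/
def Supports (G : Set E) (f : E → L0 P) : Prop :=
  N.IsDual f ∧ f ≠ 0 ∧ (∃ ξ : L0 P, ∀ x ∈ G, ∀ᵐ ω ∂P, f x ω ≤ ξ ω) ∧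
    ∃ x ∈ G, IsSupOnR f G (f x)

/-- The set of support points of `G`: points `x ∈ G` at which some
`f ∈ E*∖{0}`, bounded from above on `G`, attains `f(x) = ⋁f(G)`. -/
def SupportPoints (G : Set E) : Set E :=
  {x | x ∈ G ∧ ∃ f : E → L0 P, N.IsDual f ∧ f ≠ 0 ∧
    (∃ ξ : L0 P, ∀ y ∈ G, ∀ᵐ ω ∂P, f y ω ≤ ξ ω) ∧ IsSupOnR f G (f x)}

end RNModule


/-- Lemma 2.5. Let `(X,𝒰)` be a complete Hausdorff uniform space, `≤` a
partial ordering on `X`, and `φ : X → L̄⁰(𝓕)` proper and bounded from below, with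
`x ≤ y ⇒ φ(y) ≤ φ(x)`. Then for each (nonempty) totally ordered subset `M` of `X` with
`φ(M) ⊆ L⁰(𝓕)`, the net `{φ(m) : m ∈ M}` is a Cauchy net for the `d_{ε,λ}`-uniformity
of `L⁰(𝓕)`, i.e. the uniformity of convergence in probability `P`. -/
theorem cauchyNetProb_of_antitone
    {X : Type*} [UniformSpace X] [CompleteSpace X] [T2Space X] [PartialOrder X]
    {Ω : Type*} [MeasurableSpace Ω] {P : Measure Ω} [IsProbabilityMeasure P]
    (φ : X → L0e P)
    (hproper : ProperOn φ Set.univ)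
    (hbdd : BddBelowOn φ Set.univ)
    (hanti : ∀ x y : X, x ≤ y → ∀ᵐ ω ∂P, φ y ω ≤ φ x ω)
    (M : Set X) (hchain : IsChain (· ≤ ·) M) (hne : M.Nonempty)
    (hML0 : ∀ m ∈ M, ∀ᵐ ω ∂P, φ m ω ≠ ⊥ ∧ φ m ω ≠ ⊤) :
    CauchyNetProb φ M := by
  obtain ⟨ξ, hξ⟩ := hbdd
  obtain ⟨m', hm'M⟩ := hne
  intro ε hε lam hlam
  obtain ⟨hlam0, hlam1⟩ := hlam
  set g : Ω → ℝ := fun ω => max |ξ ω| ((φ m' ω).toReal) with hgdef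
  -- choose the truncation level K = n
  have hmono : Monotone (fun n : ℕ => {ω : Ω | g ω ≤ (n : ℝ)}) := by
    intro i j hij ω hω
    simp only [Set.mem_setOf_eq] at hω ⊢
    exact hω.trans (Nat.cast_le.mpr hij)
  have hU : (⋃ n : ℕ, {ω | g ω ≤ (n : ℝ)}) = Set.univ := by
    ext ω
    simp only [Set.mem_iUnion, Set.mem_setOf_eq, Set.mem_univ, iff_true]
    exact ⟨⌈g ω⌉₊, Nat.le_ceil _⟩
  have htend := tendsto_measure_iUnion_atTop (μ := P) hmono
  rw [hU, measure_univ] at htend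
  have h1lt : ENNReal.ofReal (1 - lam / 2) < 1 := by
    rw [← ENNReal.ofReal_one]
    exact ENNReal.ofReal_lt_ofReal_iff one_pos |>.2 (by linarith)
  obtain ⟨n, hA₁⟩ := (htend.eventually (eventually_gt_nhds h1lt)).exists
  simp only [Function.comp] at hA₁
  set A₁ : Set Ω := {ω | g ω ≤ (n : ℝ)} with hA₁def
  -- truncation
  set tr : X → Ω → ℝ := fun m ω => max (min ((φ m ω).toReal) (n : ℝ)) (-(n : ℝ)) with htrdef
  have trmeas : ∀ m : X, AEStronglyMeasurable (tr m) P := fun m =>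
    ((((φ m).aestronglyMeasurable.aemeasurable.ereal_toReal).min aemeasurable_const).max
      aemeasurable_const).aestronglyMeasurable
  have trbd : ∀ (m : X) (ω : Ω), |tr m ω| ≤ (n : ℝ) := by
    intro m ω
    rw [abs_le]
    constructor
    · exact le_trans (neg_le_neg (le_refl _)) (le_max_right _ _)
    · exact max_le (min_le_right _ _) (neg_le_self (Nat.cast_nonneg n))
  have trint : ∀ m : X, Integrable (tr m) P := fun m =>
    Integrable.mono' (integrable_const (n : ℝ)) (trmeas m) (ae_of_all _ (trbd m))
  set I : X → ℝ := fun m => ∫ ω, tr m ω ∂P with hIdef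
  -- pointwise a.e. monotonicity of tr along the order
  have trmono : ∀ a b : X, a ∈ M → b ∈ M → a ≤ b → ∀ᵐ ω ∂P, tr b ω ≤ tr a ω := by
    intro a b haM hbM hab
    filter_upwards [hanti a b hab, hML0 a haM, hML0 b hbM] with ω h1 h2 h3
    exact max_le_max (min_le_min (EReal.toReal_le_toReal h1 h3.1 h2.2) le_rfl) le_rfl
  have hIanti : ∀ a b : X, a ∈ M → b ∈ M → a ≤ b → I b ≤ I a := fun a b haM hbM hab =>
    integral_mono_ae (trint b) (trint a) (trmono a b haM hbM hab)
  have hIlb : ∀ m : X, -(n : ℝ) ≤ I m := by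
    intro m
    have := integral_mono_ae (integrable_const (-(n : ℝ))) (trint m)
      (ae_of_all _ fun ω => le_max_right _ _)
    simpa using this
  -- the infimum over the tail past m'
  set S : Set ℝ := I '' {m | m ∈ M ∧ m' ≤ m} with hSdef
  have hSne : S.Nonempty := ⟨I m', ⟨m', ⟨hm'M, le_rfl⟩, rfl⟩⟩
  have hSbdd : BddBelow S := ⟨-(n : ℝ), by rintro x ⟨m, _, rfl⟩; exact hIlb m⟩
  set L : ℝ := sInf S with hLdef
  have hδ : (0 : ℝ) < ε * lam / 4 := by positivity
  obtain ⟨x, ⟨m₀, ⟨hm₀M, hm₀ge⟩, rfl⟩, hI0⟩ := Real.lt_sInf_add_pos hSne hδ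
  refine ⟨m₀, hm₀M, ?_⟩
  have key : ∀ a ∈ M, ∀ b ∈ M, m₀ ≤ a → m₀ ≤ b → a ≤ b →
      ENNReal.ofReal (1 - lam) < P {ω | |(φ a ω).toReal - (φ b ω).toReal| < ε} := by
    intro a haM b hbM h0a h0b hab
    have haM' : m' ≤ a := le_trans hm₀ge h0a
    have hbM' : m' ≤ b := le_trans hm₀ge h0b
    set h : Ω → ℝ := fun ω => tr a ω - tr b ω with hhdef
    have hnn : 0 ≤ᵐ[P] h := by
      filter_upwards [trmono a b haM hbM hab] with ω hw
      simpa [hhdef] using hw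
    have hint : Integrable h P := (trint a).sub (trint b)
    have hIsub : ∫ ω, h ω ∂P = I a - I b := integral_sub (trint a) (trint b)
    have hIa : I a ≤ I m₀ := hIanti m₀ a hm₀M haM h0a
    have hIb : L ≤ I b := csInf_le hSbdd ⟨b, ⟨hbM, hbM'⟩, rfl⟩
    have hsmall : ∫ ω, h ω ∂P < ε * lam / 4 := by
      rw [hIsub]; linarith
    set C : Set Ω := {ω | ε ≤ h ω} with hCdef
    have hmar := mul_meas_ge_le_integral_of_nonneg hnn hint ε
    have hPC : P C < ENNReal.ofReal (lam / 4) := by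
      rw [ENNReal.lt_ofReal_iff_toReal_lt (measure_ne_top P C)]
      have : ε * (P C).toReal < ε * (lam / 4) := by
        calc ε * (P C).toReal ≤ ∫ ω, h ω ∂P := hmar
        _ < ε * lam / 4 := hsmall
        _ = ε * (lam / 4) := by ring
      exact lt_of_mul_lt_mul_left this (le_of_lt hε)
    -- on A₁ \ C, a.e., the truncations agree with the true values and are close
    have hae : ∀ᵐ ω ∂P, ω ∈ A₁ \ C → ω ∈ {ω | |(φ a ω).toReal - (φ b ω).toReal| < ε} := by
      filter_upwards [hξ a (Set.mem_univ a), hξ b (Set.mem_univ b),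
        hanti m' a haM', hanti m' b hbM', hML0 a haM, hML0 b hbM, hML0 m' hm'M,
        trmono a b haM hbM hab] with ω hξa hξb hm'a hm'b hfa hfb hfm' hba hmem
      obtain ⟨hωA, hωC⟩ := hmem
      have hgle : g ω ≤ (n : ℝ) := hωA
      have h2 : |ξ ω| ≤ (n : ℝ) := le_trans (le_max_left _ _) hgle
      have h3 : (φ m' ω).toReal ≤ (n : ℝ) := le_trans (le_max_right _ _) hgle
      have hxa : ξ ω ≤ (φ a ω).toReal := by
        have := EReal.toReal_le_toReal hξa (by simp) hfa.2
        simpa using this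
      have hxb : ξ ω ≤ (φ b ω).toReal := by
        have := EReal.toReal_le_toReal hξb (by simp) hfb.2
        simpa using this
      have hub_a : (φ a ω).toReal ≤ (n : ℝ) :=
        le_trans (EReal.toReal_le_toReal hm'a hfa.1 hfm'.2) h3
      have hub_b : (φ b ω).toReal ≤ (n : ℝ) :=
        le_trans (EReal.toReal_le_toReal hm'b hfb.1 hfm'.2) h3
      have hlb_a : -(n : ℝ) ≤ (φ a ω).toReal := le_trans (neg_le_of_abs_le h2) hxa
      have hlb_b : -(n : ℝ) ≤ (φ b ω).toReal := le_trans (neg_le_of_abs_le h2) hxb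
      have htra : tr a ω = (φ a ω).toReal := by
        simp only [htrdef]
        rw [min_eq_left hub_a, max_eq_left hlb_a]
      have htrb : tr b ω = (φ b ω).toReal := by
        simp only [htrdef]
        rw [min_eq_left hub_b, max_eq_left hlb_b]
      have hlt : h ω < ε := lt_of_not_ge hωC
      have hge : 0 ≤ h ω := by simpa [hhdef] using hba
      show |(φ a ω).toReal - (φ b ω).toReal| < ε
      rw [abs_of_nonneg (by rw [← htra, ← htrb]; simpa [hhdef] using hba)]
      calc (φ a ω).toReal - (φ b ω).toReal = h ω := by rw [hhdef]; simp [htra, htrb]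
        _ < ε := hlt
    have hstep : P (A₁ \ C) ≤ P {ω | |(φ a ω).toReal - (φ b ω).toReal| < ε} :=
      measure_mono_ae hae
    have hsplit : P A₁ ≤ P (A₁ ∩ C) + P (A₁ \ C) := measure_le_inter_add_diff P A₁ C
    have hchain2 : ENNReal.ofReal (1 - lam) + P C <
        P {ω | |(φ a ω).toReal - (φ b ω).toReal| < ε} + P C := by
      calc ENNReal.ofReal (1 - lam) + P C
          < ENNReal.ofReal (1 - lam) + ENNReal.ofReal (lam / 4) :=
            ENNReal.add_lt_add_left ENNReal.ofReal_ne_top hPC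
        _ = ENNReal.ofReal (1 - lam + lam / 4) :=
            (ENNReal.ofReal_add (by linarith) (by linarith)).symm
        _ < ENNReal.ofReal (1 - lam / 2) :=
            (ENNReal.ofReal_lt_ofReal_iff (by linarith)).2 (by linarith)
        _ < P A₁ := hA₁
        _ ≤ P (A₁ ∩ C) + P (A₁ \ C) := hsplit
        _ ≤ P C + P {ω | |(φ a ω).toReal - (φ b ω).toReal| < ε} :=
            add_le_add (measure_mono (Set.inter_subset_right)) hstep
        _ = P {ω | |(φ a ω).toReal - (φ b ω).toReal| < ε} + P C := add_comm _ _
    exact (ENNReal.add_lt_add_iff_right (measure_ne_top P C)).1 hchain2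
  intro m₁ hm₁ m₂ hm₂ h01 h02
  rcases eq_or_ne m₁ m₂ with rfl | hne'
  · exact key m₁ hm₁ m₁ hm₁ h01 h01 le_rfl
  · rcases hchain hm₁ hm₂ hne' with hle | hle
    · exact key m₁ hm₁ m₂ hm₂ h01 h02 hle
    · have := key m₂ hm₂ m₁ hm₁ h02 h01 hle
      simpa [abs_sub_comm] using this


end GYY
end

section
/- Let (X,𝒰) be a complete Hausdorff uniform space, ≤ a partial ordering on X, and φ : X → L̄⁰(𝓕) a proper function bounded from below by some η₀ ∈ L⁰(𝓕). Assume: (1) for each x ∈ X, the set S(x) = {y ∈ X : x ≤ y} is closed; (2) x ≤ y implies φ(y) ≤ φ(x); (3) whenever G is a totally ordered subset of X such that the net {φ(g) : g ∈ G} is a Cauchy net in L⁰(𝓕) with respect to the d_{ε,λ}-uniformity, the net {x_g : g ∈ G} with x_g = g is a Cauchy net in X. Then for each x₀ ∈ dom(φ) there exists x̄ ∈ dom(φ) such that x₀ ≤ x̄ and x̄ is a maximal element of X with respect to ≤. -/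
open MeasureTheory ENNReal Set Filter

namespace GYY

variable {Ω : Type*} [MeasurableSpace Ω]

lemma cauchyNetProb_of_chain
    {X : Type*} [PartialOrder X]
    {Ω : Type*} [MeasurableSpace Ω] {P : Measure Ω} [IsProbabilityMeasure P]
    (φ : X → L0e P) (η₀ : L0 P)
    (hbdd : ∀ x : X, ∀ᵐ ω ∂P, (η₀ ω : EReal) ≤ φ x ω)
    (hanti : ∀ x y : X, x ≤ y → ∀ᵐ ω ∂P, φ y ω ≤ φ x ω)
    (x₀ : X) (hx₀ : ∀ᵐ ω ∂P, φ x₀ ω < ⊤)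
    (c : Set X) (hne : c.Nonempty) (hsub : ∀ g ∈ c, x₀ ≤ g) :
    CauchyNetProb φ c := by
  intro ε hε lam hlam
  obtain ⟨hlam0, hlam1⟩ := hlam
  -- the dominating random variable
  set M : Ω → ℝ := fun ω => max |η₀ ω| |(φ x₀ ω).toReal| with hMdef
  have hMmeas : Measurable M :=
    (η₀.stronglyMeasurable.measurable.abs).max
      ((measurable_ereal_toReal.comp (φ x₀).stronglyMeasurable.measurable).abs)
  -- choose K
  have hKex : ∃ K : ℕ, P {ω | (K : ℝ) < M ω} < ENNReal.ofReal (lam / 4) := by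
    have hanti' : Antitone (fun n : ℕ => {ω | (n : ℝ) < M ω}) := by
      intro i j hij ω hω
      exact lt_of_le_of_lt (by exact_mod_cast hij : (i:ℝ) ≤ j) hω
    have hinter : (⋂ n : ℕ, {ω | (n : ℝ) < M ω}) = ∅ := by
      ext ω; simp only [mem_iInter, mem_setOf_eq, mem_empty_iff_false, iff_false, not_forall,
        not_lt]
      obtain ⟨n, hn⟩ := exists_nat_ge (M ω)
      exact ⟨n, hn⟩
    have htend := tendsto_measure_iInter_atTop
      (μ := P) (s := fun n : ℕ => {ω | (n : ℝ) < M ω})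
      (fun n => (hMmeas measurableSet_Ioi).nullMeasurableSet) hanti'
      ⟨0, measure_ne_top _ _⟩
    rw [hinter, measure_empty] at htend
    have := htend.eventually (eventually_lt_nhds (by positivity : (0:ℝ≥0∞) < ENNReal.ofReal (lam/4)))
    exact this.exists
  obtain ⟨K, hK⟩ := hKex
  -- truncation
  set ψ : X → Ω → ℝ := fun g ω => max (-(K : ℝ)) (min (K : ℝ) ((φ g ω).toReal)) with hψdef
  have hψmeas : ∀ g, Measurable (ψ g) := fun g =>
    measurable_const.max (measurable_const.min
      (measurable_ereal_toReal.comp (φ g).stronglyMeasurable.measurable))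
  have hψbd : ∀ g ω, |ψ g ω| ≤ (K : ℝ) := by
    intro g ω
    rw [abs_le]
    constructor
    · exact le_max_left _ _
    · exact max_le (neg_le_self (Nat.cast_nonneg K)) (min_le_left _ _)
  have hψint : ∀ g, Integrable (ψ g) P :=
    fun g => (integrable_const (K : ℝ)).mono' (hψmeas g).aestronglyMeasurable
      (Eventually.of_forall fun ω => by simpa using hψbd g ω)
  set F : X → ℝ := fun g => ∫ ω, ψ g ω ∂P with hFdef
  have hFlb : ∀ g, -(K : ℝ) ≤ F g := by
    intro g
    calc -(K : ℝ) = ∫ _ : Ω, (-(K : ℝ)) ∂P := by simp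
    _ ≤ F g := integral_mono (integrable_const _) (hψint g) fun ω => le_max_left _ _
  have hbddbelow : BddBelow (F '' c) := ⟨-(K : ℝ), by rintro y ⟨g, _, rfl⟩; exact hFlb g⟩
  set α : ℝ := sInf (F '' c) with hαdef
  have hδpos : 0 < ε * (lam / 8) := by positivity
  obtain ⟨y, ⟨m₀, hm₀c, rfl⟩, hy⟩ :=
    exists_lt_of_csInf_lt (hne.image F) (lt_add_of_pos_right α hδpos)
  refine ⟨m₀, hm₀c, ?_⟩
  intro m₁ hm₁ m₂ hm₂ h01 h02
  -- Markov bound for each m ≥ m₀ in c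
  have hB : ∀ m ∈ c, m₀ ≤ m → P {ω | ε ≤ ψ m₀ ω - ψ m ω} ≤ ENNReal.ofReal (lam / 8) := by
    intro m hm h0m
    have hae : ∀ᵐ ω ∂P, 0 ≤ ψ m₀ ω - ψ m ω := by
      filter_upwards [hbdd m, hanti m₀ m h0m, hanti x₀ m₀ (hsub m₀ hm₀c), hx₀] with ω h1 h2 h3 h4
      have hm₀top : φ m₀ ω ≠ ⊤ := (lt_of_le_of_lt h3 h4).ne
      have hmbot : φ m ω ≠ ⊥ := by
        intro h; rw [h] at h1; exact (EReal.coe_ne_bot _ (le_bot_iff.mp h1))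
      have := EReal.toReal_le_toReal h2 hmbot hm₀top
      have hψle : ψ m ω ≤ ψ m₀ ω := max_le_max le_rfl (min_le_min le_rfl this)
      linarith
    have hint : Integrable (fun ω => ψ m₀ ω - ψ m ω) P := (hψint m₀).sub (hψint m)
    have hFm : α ≤ F m := csInf_le hbddbelow ⟨m, hm, rfl⟩
    have hIlt : ∫ ω, (ψ m₀ ω - ψ m ω) ∂P < ε * (lam / 8) := by
      rw [integral_sub (hψint m₀) (hψint m)]
      have : F m₀ - F m < ε * (lam / 8) := by
        simp only [hFdef] at *
        linarith
      exact this
    have hmarkov := mul_meas_ge_le_integral_of_nonneg hae hint ε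
    have htoReal : (P {ω | ε ≤ ψ m₀ ω - ψ m ω}).toReal ≤ lam / 8 := by
      change ε * (P {ω | ε ≤ ψ m₀ ω - ψ m ω}).toReal ≤ _ at hmarkov
      nlinarith [hmarkov, hIlt]
    exact ENNReal.le_ofReal_iff_toReal_le (measure_ne_top _ _) (by positivity) |>.2 htoReal
  have hB₁ := hB m₁ hm₁ h01
  have hB₂ := hB m₂ hm₂ h02
  -- the a.e. good event
  set Q : Ω → Prop := fun ω =>
    ((η₀ ω : EReal) ≤ φ m₁ ω ∧ φ m₁ ω ≤ φ m₀ ω) ∧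
    ((η₀ ω : EReal) ≤ φ m₂ ω ∧ φ m₂ ω ≤ φ m₀ ω) ∧
    ((η₀ ω : EReal) ≤ φ m₀ ω ∧ φ m₀ ω ≤ φ x₀ ω) ∧ φ x₀ ω < ⊤ with hQdef
  have hQae : ∀ᵐ ω ∂P, Q ω := by
    filter_upwards [hbdd m₁, hanti m₀ m₁ h01, hbdd m₂, hanti m₀ m₂ h02, hbdd m₀,
      hanti x₀ m₀ (hsub m₀ hm₀c), hx₀] with ω a1 a2 a3 a4 a5 a6 a7
    exact ⟨⟨a1, a2⟩, ⟨a3, a4⟩, ⟨a5, a6⟩, a7⟩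
  have hQnull : P {ω | ¬ Q ω} = 0 := by
    simpa [ae_iff] using hQae
  -- key pointwise implication
  have key : ∀ ω, Q ω → M ω ≤ K → ψ m₀ ω - ψ m₁ ω < ε → ψ m₀ ω - ψ m₂ ω < ε →
      |(φ m₁ ω).toReal - (φ m₂ ω).toReal| < ε := by
    intro ω hQ hMK h1 h2
    obtain ⟨⟨q1, q2⟩, ⟨q3, q4⟩, ⟨q5, q6⟩, q7⟩ := hQ
    have hη : |η₀ ω| ≤ (K : ℝ) := le_trans (le_max_left _ _) hMK
    have hx0r : |(φ x₀ ω).toReal| ≤ (K : ℝ) := le_trans (le_max_right _ _) hMK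
    have hx0top : φ x₀ ω ≠ ⊤ := q7.ne
    have hm₀top : φ m₀ ω ≠ ⊤ := (lt_of_le_of_lt q6 q7).ne
    have hm₁top : φ m₁ ω ≠ ⊤ := (lt_of_le_of_lt (le_trans q2 q6) q7).ne
    have hm₂top : φ m₂ ω ≠ ⊤ := (lt_of_le_of_lt (le_trans q4 q6) q7).ne
    have hcoebot : ∀ r : ℝ, (r : EReal) ≠ ⊥ := fun r => EReal.coe_ne_bot r
    have hm₁bot : φ m₁ ω ≠ ⊥ := fun h => hcoebot (η₀ ω) (le_bot_iff.mp (h ▸ q1))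
    have hm₂bot : φ m₂ ω ≠ ⊥ := fun h => hcoebot (η₀ ω) (le_bot_iff.mp (h ▸ q3))
    have hm₀bot : φ m₀ ω ≠ ⊥ := fun h => hcoebot (η₀ ω) (le_bot_iff.mp (h ▸ q5))
    -- sandwich in [-K, K]
    have sandwich : ∀ (z : EReal), (η₀ ω : EReal) ≤ z → z ≤ φ m₀ ω →
        -(K:ℝ) ≤ z.toReal ∧ z.toReal ≤ (K:ℝ) := by
      intro z hz1 hz2
      have hzbot : z ≠ ⊥ := fun h => hcoebot (η₀ ω) (le_bot_iff.mp (h ▸ hz1))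
      have hztop : z ≠ ⊤ := (lt_of_le_of_lt (le_trans hz2 q6) q7).ne
      have h1' : η₀ ω ≤ z.toReal := by
        have := EReal.toReal_le_toReal hz1 (hcoebot _) hztop
        simpa [EReal.toReal_coe] using this
      have h2' : z.toReal ≤ (φ x₀ ω).toReal :=
        EReal.toReal_le_toReal (le_trans hz2 q6) hzbot hx0top
      constructor
      · have : -(K:ℝ) ≤ η₀ ω := by
          have := abs_le.mp hη; linarith [this.1]
        linarith
      · have := abs_le.mp hx0r; linarith [this.2]
    have hclamp : ∀ (z : EReal), (η₀ ω : EReal) ≤ z → z ≤ φ m₀ ω →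
        max (-(K:ℝ)) (min (K:ℝ) z.toReal) = z.toReal := by
      intro z hz1 hz2
      obtain ⟨hlo, hhi⟩ := sandwich z hz1 hz2
      rw [min_eq_right hhi, max_eq_right hlo]
    have e1 : ψ m₁ ω = (φ m₁ ω).toReal := hclamp _ q1 q2
    have e2 : ψ m₂ ω = (φ m₂ ω).toReal := hclamp _ q3 q4
    have e0 : ψ m₀ ω = (φ m₀ ω).toReal := hclamp _ q5 le_rfl
    have hle1 : (φ m₁ ω).toReal ≤ (φ m₀ ω).toReal := EReal.toReal_le_toReal q2 hm₁bot hm₀top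
    have hle2 : (φ m₂ ω).toReal ≤ (φ m₀ ω).toReal := EReal.toReal_le_toReal q4 hm₂bot hm₀top
    rw [e1] at h1; rw [e2] at h2; rw [e0] at h1 h2
    rw [abs_sub_lt_iff]
    constructor <;> linarith
  -- assemble the measure estimate
  set T : Set Ω := {ω | |(φ m₁ ω).toReal - (φ m₂ ω).toReal| < ε} with hTdef
  have hsubset : Tᶜ ⊆ {ω | ¬ Q ω} ∪ ({ω | (K:ℝ) < M ω} ∪
      ({ω | ε ≤ ψ m₀ ω - ψ m₁ ω} ∪ {ω | ε ≤ ψ m₀ ω - ψ m₂ ω})) := by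
    intro ω hω
    by_contra hcon
    simp only [mem_union, mem_setOf_eq, not_or, not_lt, not_le, Classical.not_not] at hcon
    obtain ⟨hq, hMK, h1, h2⟩ := hcon
    exact hω (key ω hq hMK h1 h2)
  have hTc : P Tᶜ ≤ ENNReal.ofReal (lam / 2) := by
    calc P Tᶜ ≤ P {ω | ¬ Q ω} + (P {ω | (K:ℝ) < M ω} +
        (P {ω | ε ≤ ψ m₀ ω - ψ m₁ ω} + P {ω | ε ≤ ψ m₀ ω - ψ m₂ ω})) := by
          refine le_trans (measure_mono hsubset) ?_
          refine le_trans (measure_union_le _ _) ?_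
          gcongr
          refine le_trans (measure_union_le _ _) ?_
          gcongr
          exact measure_union_le _ _
    _ ≤ 0 + (ENNReal.ofReal (lam / 4) + (ENNReal.ofReal (lam / 8) + ENNReal.ofReal (lam / 8))) :=
          add_le_add (le_of_eq hQnull) (add_le_add hK.le (add_le_add hB₁ hB₂))
    _ = ENNReal.ofReal (lam / 2) := by
          rw [zero_add, ← ENNReal.ofReal_add (by positivity) (by positivity),
            ← ENNReal.ofReal_add (by positivity) (by positivity)]
          congr 1
          ring
  have hone : (1 : ℝ≥0∞) ≤ P T + P Tᶜ := by
    have : (1 : ℝ≥0∞) = P (T ∪ Tᶜ) := by rw [union_compl_self, measure_univ]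
    rw [this]
    exact measure_union_le _ _
  calc ENNReal.ofReal (1 - lam) < ENNReal.ofReal (1 - lam / 2) := by
        rw [ENNReal.ofReal_lt_ofReal_iff (by linarith)]
        linarith
  _ = 1 - ENNReal.ofReal (lam / 2) := by
        rw [ENNReal.ofReal_sub _ (by positivity), ENNReal.ofReal_one]
  _ ≤ 1 - P Tᶜ := by exact tsub_le_tsub_left hTc 1
  _ ≤ P T := tsub_le_iff_right.2 hone

/-- Theorem 2.6. A general order-theoretic principle: under hypotheses
(1) each `S(x) = {y : x ≤ y}` is closed, (2) `φ` is antitone, (3) if the net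
`{φ(g) : g ∈ G}` of a totally ordered `G ⊆ X` (with `φ(G) ⊆ L⁰`) is Cauchy in probability
then the net `{x_g = g : g ∈ G}` is a Cauchy net in `X`, every `x₀ ∈ dom(φ)` is dominated
by a maximal element `x̄ ∈ dom(φ)` of `X`. -/
theorem exists_maximal_above
    {X : Type*} [UniformSpace X] [CompleteSpace X] [T2Space X] [PartialOrder X]
    {Ω : Type*} [MeasurableSpace Ω] {P : Measure Ω} [IsProbabilityMeasure P]
    (φ : X → L0e P) (η₀ : L0 P)
    (hproper : ProperOn φ Set.univ)
    (hbdd : ∀ x : X, ∀ᵐ ω ∂P, (η₀ ω : EReal) ≤ φ x ω)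
    (hclosed : ∀ x : X, IsClosed {y : X | x ≤ y})
    (hanti : ∀ x y : X, x ≤ y → ∀ᵐ ω ∂P, φ y ω ≤ φ x ω)
    (hcauchy : ∀ G : Set X, IsChain (· ≤ ·) G → G.Nonempty →
      (∀ g ∈ G, ∀ᵐ ω ∂P, φ g ω ≠ ⊥ ∧ φ g ω ≠ ⊤) →
      CauchyNetProb φ G → Cauchy (netFilter G))
    (x₀ : X) (hx₀ : ∀ᵐ ω ∂P, φ x₀ ω < ⊤) :
    ∃ xb : X, (∀ᵐ ω ∂P, φ xb ω < ⊤) ∧ x₀ ≤ xb ∧ ∀ y : X, xb ≤ y → y = xb := by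
  have ih : ∀ c ⊆ {y : X | x₀ ≤ y}, IsChain (· ≤ ·) c → ∀ y ∈ c,
      ∃ ub ∈ {y : X | x₀ ≤ y}, ∀ z ∈ c, z ≤ ub := by
    intro c hcs hc y hy
    have hsub : ∀ g ∈ c, x₀ ≤ g := fun g hg => hcs hg
    have hCNP := cauchyNetProb_of_chain φ η₀ hbdd hanti x₀ hx₀ c ⟨y, hy⟩ hsub
    have hfin : ∀ g ∈ c, ∀ᵐ ω ∂P, φ g ω ≠ ⊥ ∧ φ g ω ≠ ⊤ := by
      intro g hg
      filter_upwards [hproper.1 g (mem_univ g), hanti x₀ g (hcs hg), hx₀] with ω h1 h2 h3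
      exact ⟨h1.ne', (lt_of_le_of_lt h2 h3).ne⟩
    have hC : Cauchy (netFilter c) := hcauchy c hc ⟨y, hy⟩ hfin hCNP
    obtain ⟨xb, hxb⟩ := CompleteSpace.complete hC
    have hub : ∀ g ∈ c, g ≤ xb := by
      intro g hg
      have h0 : netFilter c ≤ 𝓟 {z : X | z ∈ c ∧ g ≤ z} := iInf_le_of_le g (iInf_le _ hg)
      have h1 : netFilter c ≤ 𝓟 {z : X | g ≤ z} :=
        le_trans h0 (principal_mono.2 (fun z hz => hz.2))
      have hne' : (nhds xb ⊓ 𝓟 {z : X | g ≤ z}).NeBot := hC.1.mono (le_inf hxb h1)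
      have hcl : ClusterPt xb (𝓟 {z : X | g ≤ z}) := hne'
      have := mem_closure_iff_clusterPt.2 hcl
      rwa [(hclosed g).closure_eq] at this
    exact ⟨xb, (hcs hy).trans (hub y hy), hub⟩
  obtain ⟨m, hxm, hmax⟩ := zorn_le_nonempty₀ {y : X | x₀ ≤ y} ih x₀ le_rfl
  refine ⟨m, ?_, hxm, fun y hmy => le_antisymm (hmax.2 (hxm.trans hmy) hmy) hmy⟩
  filter_upwards [hanti x₀ m hxm, hx₀] with ω h1 h2 using lt_of_le_of_lt h1 h2

end GYY
end

section
/- Ekeland's variational principle on a d_{ε,λ}-complete RM space: Let (E,d) be a d_{ε,λ}-complete random metric space with base (Ω,𝓕,P) and φ : E → L̄⁰(𝓕) a proper, 𝒯_{ε,λ}-lower semicontinuous function which is bounded from below. Then for each x₀ ∈ dom(φ) there exists v ∈ dom(φ) such that: (1) φ(v) ≤ φ(x₀) − d(x₀,v); and (2) for each x ∈ E with x ≠ v, φ(x) ≰ φ(v) − d(x,v), i.e. there exists A_x ∈ 𝓕 with P(A_x) > 0 such that φ(x) > φ(v) − d(x,v) a.s. on A_x. -/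
open MeasureTheory ENNReal Set Filter

namespace GYY

variable {Ω : Type*} [MeasurableSpace Ω]

section EkelandAux

variable {Ω : Type*} [MeasurableSpace Ω] {P : Measure Ω} {E : Type*}

private lemma ereal_add_coe_lt_top {a b : EReal} {u : ℝ} (h : a + (u : EReal) ≤ b)
    (hb : b < ⊤) : a < ⊤ := by
  induction a using EReal.rec with
  | bot => exact bot_lt_top
  | coe r => exact EReal.coe_lt_top r
  | top =>
      rw [EReal.top_add_coe] at h
      exact absurd (top_le_iff.1 h) hb.ne

private lemma ereal_le_coe_sub {a : EReal} {u t : ℝ} (h : a + (u : EReal) ≤ (t : EReal)) :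
    a ≤ ((t - u : ℝ) : EReal) := by
  induction a using EReal.rec with
  | bot => exact bot_le
  | coe r =>
      rw [← EReal.coe_add] at h
      exact EReal.coe_le_coe_iff.2 (by linarith [EReal.coe_le_coe_iff.1 h])
  | top =>
      rw [EReal.top_add_coe] at h
      exact absurd h (not_le.2 (EReal.coe_lt_top t))

private lemma ereal_coe_sub_le {a : EReal} {u t : ℝ} (h : a ≤ ((t - u : ℝ) : EReal)) :
    a + (u : EReal) ≤ (t : EReal) := by
  induction a using EReal.rec with
  | bot => rw [EReal.bot_add]; exact bot_le
  | coe r =>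
      rw [← EReal.coe_add]
      exact EReal.coe_le_coe_iff.2 (by linarith [EReal.coe_le_coe_iff.1 h])
  | top => exact absurd h (not_le.2 (EReal.coe_lt_top _))

private lemma ereal_toReal_add_le {a b : EReal} {u : ℝ} (h : a + (u : EReal) ≤ b)
    (ha : ⊥ < a) (hb : b < ⊤) : a.toReal + u ≤ b.toReal := by
  have hat : a < ⊤ := ereal_add_coe_lt_top h hb
  lift a to ℝ using ⟨hat.ne, ha.ne'⟩ with s hs
  have hbb : ⊥ < b := lt_of_lt_of_le (by rw [← EReal.coe_add]; exact EReal.bot_lt_coe _) h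
  lift b to ℝ using ⟨hb.ne, hbb.ne'⟩ with t ht
  rw [← EReal.coe_add, EReal.coe_le_coe_iff] at h
  simpa [EReal.toReal_coe] using h

private lemma measure_le_of_ae_imp {P : Measure Ω} {A B : Set Ω}
    (h : ∀ᵐ ω ∂P, ω ∈ A → ω ∈ B) : P A ≤ P B := by
  calc P A ≤ P (B ∪ {ω | ¬ (ω ∈ A → ω ∈ B)}) := by
        refine measure_mono fun ω hω => ?_
        by_cases hb : ω ∈ B
        · exact Or.inl hb
        · exact Or.inr fun himp => hb (himp hω)
    _ ≤ P B + P {ω | ¬ (ω ∈ A → ω ∈ B)} := measure_union_le _ _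
    _ = P B := by rw [ae_iff.1 h, add_zero]

/-- `y ∈ S(x)`, i.e. `φ(y) + d(x,y) ≤ φ(x)` a.s. -/
abbrev EkRel (M : RMSpace P E) (φ : E → L0e P) (x y : E) : Prop :=
  ∀ᵐ ω ∂P, φ y ω + (M.d x y ω : EReal) ≤ φ x ω

private lemma ekRel_refl (M : RMSpace P E) (φ : E → L0e P) (x : E) : EkRel M φ x x := by
  have h0 : M.d x x = 0 := (M.d_eq_zero_iff x x).2 rfl
  have hz : (M.d x x : Ω → ℝ) =ᵐ[P] 0 := by rw [h0]; exact AEEqFun.coeFn_zero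
  filter_upwards [hz] with ω hω
  rw [hω]
  simp

private lemma ekRel_trans {M : RMSpace P E} {φ : E → L0e P} {x y z : E}
    (h1 : EkRel M φ x y) (h2 : EkRel M φ y z) : EkRel M φ x z := by
  filter_upwards [h1, h2, M.d_triangle x y z] with ω hxy hyz htri
  calc φ z ω + (M.d x z ω : EReal)
      ≤ φ z ω + ((M.d x y ω + M.d y z ω : ℝ) : EReal) :=
        add_le_add_right (EReal.coe_le_coe_iff.2 htri) _
    _ = (φ z ω + (M.d y z ω : EReal)) + (M.d x y ω : EReal) := by
        rw [EReal.coe_add, add_comm ((M.d x y ω : ℝ) : EReal), ← add_assoc]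
    _ ≤ φ y ω + (M.d x y ω : EReal) := add_le_add_left hyz _
    _ ≤ φ x ω := hxy

end EkelandAux

set_option maxHeartbeats 2000000 in
/-- Theorem 2.10: Ekeland's variational principle on a
`d_{ε,λ}`-complete random metric space. For each `x₀ ∈ dom(φ)` there is `v ∈ dom(φ)` with
(1) `φ(v) ≤ φ(x₀) - d(x₀,v)` and (2) for every `x ≠ v`, `φ(x) ≰ φ(v) - d(x,v)`, i.e.
there is `A_x ∈ 𝓕` with `P(A_x) > 0` and `φ(x) > φ(v) - d(x,v)` a.s. on `A_x`. -/
theorem ekeland_RM_EL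
    {Ω : Type*} [MeasurableSpace Ω] {P : Measure Ω} [IsProbabilityMeasure P]
    {E : Type*} (M : RMSpace P E) (hcomp : M.CompleteEL)
    (φ : E → L0e P)
    (hproper : ProperOn φ Set.univ) (hlsc : M.LscEL φ) (hbdd : BddBelowOn φ Set.univ)
    (x₀ : E) (hx₀ : ∀ᵐ ω ∂P, φ x₀ ω < ⊤) :
    ∃ v : E, (∀ᵐ ω ∂P, φ v ω < ⊤) ∧
      (∀ᵐ ω ∂P, φ v ω + (M.d x₀ v ω : EReal) ≤ φ x₀ ω) ∧
      ∀ x : E, x ≠ v → ∃ A : Set Ω, MeasurableSet A ∧ 0 < P A ∧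
        ∀ᵐ ω ∂P, ω ∈ A → φ v ω < φ x ω + (M.d x v ω : EReal) := by
  classical
  obtain ⟨ξ, hξ⟩ := hbdd
  have hbot : ∀ y : E, ∀ᵐ ω ∂P, ⊥ < φ y ω := fun y => hproper.1 y (mem_univ y)
  have hmg : ∀ y : E, Measurable fun ω => (φ y ω).toReal := fun y =>
    measurable_ereal_toReal.comp (φ y).stronglyMeasurable.measurable
  have hmd : ∀ p q : E, Measurable fun ω => M.d p q ω := fun p q =>
    (M.d p q).stronglyMeasurable.measurable
  set F : E → ℝ := fun y => ∫ ω, Real.arctan ((φ y ω).toReal) ∂P with hF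
  have hint : ∀ y : E, Integrable (fun ω => Real.arctan ((φ y ω).toReal)) P := by
    intro y
    refine Integrable.mono' (integrable_const (Real.pi / 2))
      (Real.continuous_arctan.measurable.comp (hmg y)).aestronglyMeasurable
      (ae_of_all _ fun ω => ?_)
    rw [Real.norm_eq_abs, abs_le]
    exact ⟨(Real.neg_pi_div_two_lt_arctan _).le, (Real.arctan_lt_pi_div_two _).le⟩
  have hFlb : ∀ y : E, -(Real.pi / 2) ≤ F y := by
    intro y
    have h := integral_mono (integrable_const (-(Real.pi / 2))) (hint y)
      (fun ω => (Real.neg_pi_div_two_lt_arctan _).le)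
    simpa using h
  -- selection of an almost-minimizing successor
  have hsel : ∀ (x : E) (n : ℕ), ∃ y, EkRel M φ x y ∧
      ∀ z, EkRel M φ x z → F y ≤ F z + (2 : ℝ)⁻¹ ^ n := by
    intro x n
    have hne : (F '' {y | EkRel M φ x y}).Nonempty := ⟨F x, x, ekRel_refl M φ x, rfl⟩
    have hbb : BddBelow (F '' {y | EkRel M φ x y}) := by
      refine ⟨-(Real.pi / 2), ?_⟩
      rintro _ ⟨z, -, rfl⟩
      exact hFlb z
    obtain ⟨a, ⟨y, hy, rfl⟩, hlt⟩ := Real.lt_sInf_add_pos hne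
      (pow_pos (by norm_num : (0:ℝ) < 2⁻¹) n)
    exact ⟨y, hy, fun z hz =>
      (hlt.trans_le (add_le_add_left (csInf_le hbb ⟨z, hz, rfl⟩) _)).le⟩
  obtain ⟨seq, hseq0, hseqP⟩ :
      ∃ seq : ℕ → E, seq 0 = x₀ ∧ ∀ n, EkRel M φ (seq n) (seq (n+1)) ∧
        ∀ z, EkRel M φ (seq n) z → F (seq (n+1)) ≤ F z + (2 : ℝ)⁻¹ ^ n := by
    refine ⟨fun n => Nat.rec x₀ (fun k ih => (hsel ih k).choose) n, rfl, fun n => ?_⟩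
    exact (hsel _ n).choose_spec
  have hrel : ∀ m n, m ≤ n → EkRel M φ (seq m) (seq n) := by
    intro m n h
    induction n, h using Nat.le_induction with
    | base => exact ekRel_refl M φ _
    | succ n hmn ih => exact ekRel_trans ih (hseqP n).1
  have htop : ∀ n, ∀ᵐ ω ∂P, φ (seq n) ω < ⊤ := by
    intro n
    have h := hrel 0 n (Nat.zero_le n)
    rw [hseq0] at h
    filter_upwards [h, hx₀] with ω h1 h2
    exact ereal_add_coe_lt_top h1 h2
  have hch : ∀ n m : ℕ, ∀ᵐ ω ∂P, n ≤ m →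
      (φ (seq m) ω).toReal + M.d (seq n) (seq m) ω ≤ (φ (seq n) ω).toReal := by
    intro n m
    by_cases h : n ≤ m
    · filter_upwards [hrel n m h, htop n, hbot (seq m)] with ω h1 h2 h3 _
      exact ereal_toReal_add_le h1 h3 h2
    · exact Filter.Eventually.of_forall fun ω h1 => absurd h1 h
  have hlowae : ∀ n : ℕ, ∀ᵐ ω ∂P, ξ ω ≤ (φ (seq n) ω).toReal := by
    intro n
    filter_upwards [hξ (seq n) (mem_univ _), htop n, hbot (seq n)] with ω h1 h2 h3
    lift (φ (seq n) ω) to ℝ using ⟨h2.ne, h3.ne'⟩ with t ht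
    simpa using EReal.coe_le_coe_iff.1 h1
  have hAE : ∀ᵐ ω ∂P, (∀ n m : ℕ, n ≤ m →
      (φ (seq m) ω).toReal + M.d (seq n) (seq m) ω ≤ (φ (seq n) ω).toReal) ∧
      (∀ n m : ℕ, 0 ≤ M.d (seq n) (seq m) ω) ∧ (∀ n, ξ ω ≤ (φ (seq n) ω).toReal) :=
    ((ae_all_iff.2 fun n => ae_all_iff.2 fun m => hch n m).and
      ((ae_all_iff.2 fun n => ae_all_iff.2 fun m => M.d_nonneg _ _).and
        (ae_all_iff.2 hlowae)))
  -- the sequence is Cauchy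
  have hcauchy : M.CauchySeqEL seq := by
    intro ε hε lam hlam
    set T : ℕ → Set Ω := fun N =>
      {ω | ∀ m n : ℕ, N ≤ m → N ≤ n →
        |(φ (seq m) ω).toReal - (φ (seq n) ω).toReal| < ε} with hT
    have hmono : Monotone T := by
      intro N N' hNN ω hω m n hm hn
      exact hω m n (hNN.trans hm) (hNN.trans hn)
    have hcov : ∀ᵐ ω ∂P, ω ∈ ⋃ N, T N := by
      filter_upwards [hAE] with ω hω
      obtain ⟨h1, h2, h3⟩ := hω
      have hanti : Antitone fun n => (φ (seq n) ω).toReal := by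
        intro a b hab
        have ha := h1 a b hab
        have hb := h2 a b
        dsimp only
        linarith
      have hbdd : BddBelow (Set.range fun n => (φ (seq n) ω).toReal) := by
        refine ⟨ξ ω, ?_⟩
        rintro _ ⟨n, rfl⟩
        exact h3 n
      have hcs := (tendsto_atTop_ciInf hanti hbdd).cauchySeq
      rw [Metric.cauchySeq_iff] at hcs
      obtain ⟨N, hN⟩ := hcs ε hε
      exact Set.mem_iUnion.2 ⟨N, fun m n hm hn => by
        simpa [Real.dist_eq] using hN m hm n hn⟩
    have hone : P (⋃ N, T N) = 1 := by
      refine le_antisymm prob_le_one ?_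
      calc (1:ℝ≥0∞) = P univ := measure_univ.symm
        _ ≤ P (⋃ N, T N) := measure_le_of_ae_imp (by
            filter_upwards [hcov] with ω h _; exact h)
    have hten := tendsto_measure_iUnion_atTop (μ := P) hmono
    rw [hone] at hten
    have hlt1 : ENNReal.ofReal (1 - lam) < 1 := by
      rw [← ENNReal.ofReal_one]
      exact (ENNReal.ofReal_lt_ofReal_iff_of_nonneg (by linarith [hlam.2])).2
        (by linarith [hlam.1])
    obtain ⟨N, hN⟩ := (hten.eventually (eventually_gt_nhds hlt1)).exists
    refine ⟨N, fun m hm n hn => ?_⟩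
    refine lt_of_lt_of_le hN (measure_le_of_ae_imp ?_)
    filter_upwards [hAE] with ω hω hmem
    obtain ⟨h1, h2, h3⟩ := hω
    have habs := hmem m n hm hn
    rw [abs_lt] at habs
    rcases le_total m n with h | h
    · have := h1 m n h
      show M.d (seq m) (seq n) ω < ε
      linarith [habs.1, habs.2]
    · have := h1 n m h
      have hsymm : M.d (seq m) (seq n) = M.d (seq n) (seq m) := M.d_symm _ _
      show M.d (seq m) (seq n) ω < ε
      rw [hsymm]
      linarith [habs.1, habs.2]
  obtain ⟨v, hv⟩ := hcomp seq hcauchy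
  -- v belongs to every S(seq n), via lower semicontinuity
  have relv : ∀ n, EkRel M φ (seq n) v := by
    intro n
    have hmk : AEStronglyMeasurable (fun ω => (φ (seq n) ω).toReal) P :=
      (hmg (seq n)).aestronglyMeasurable
    set φR : L0 P := AEEqFun.mk _ hmk with hφR
    set r : ℕ → L0 P := fun m => φR - M.d (seq n) (seq (n + m)) with hr
    set s : L0 P := φR - M.d (seq n) v with hs
    have hφRcoe : (φR : Ω → ℝ) =ᵐ[P] fun ω => (φ (seq n) ω).toReal := AEEqFun.coeFn_mk _ _
    have hi : ∀ m, ∀ᵐ ω ∂P, φ (seq (n + m)) ω ≤ ((r m ω : ℝ) : EReal) := by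
      intro m
      filter_upwards [AEEqFun.coeFn_sub φR (M.d (seq n) (seq (n + m))), hφRcoe,
        hrel n (n + m) (Nat.le_add_right n m), htop n, hbot (seq n)] with ω hc1 hc2 h1 h2 h3
      have he : r m ω = (φ (seq n) ω).toReal - M.d (seq n) (seq (n + m)) ω := by
        simpa [hc2] using hc1
      rw [he]
      refine ereal_le_coe_sub ?_
      rwa [← EReal.coe_toReal h2.ne h3.ne'] at h1
    have hii : M.TendstoEL (fun m => seq (n + m)) v := by
      intro ε hε lam hlam
      obtain ⟨N, hN⟩ := hv ε hε lam hlam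
      exact ⟨N, fun m hm => hN (n + m) (hm.trans (Nat.le_add_left m n))⟩
    have hiii : TendstoProb P r s := by
      intro ε hε lam hlam
      obtain ⟨N, hN⟩ := hv ε hε lam hlam
      refine ⟨N, fun m hm => ?_⟩
      have hbound : ∀ᵐ ω ∂P, |r m ω - s ω| ≤ M.d (seq (n + m)) v ω := by
        filter_upwards [AEEqFun.coeFn_sub φR (M.d (seq n) (seq (n + m))),
          AEEqFun.coeFn_sub φR (M.d (seq n) v),
          M.d_triangle (seq n) (seq (n + m)) v,
          M.d_triangle (seq n) v (seq (n + m))] with ω hc1 hc2 ht1 ht2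
        have hsymm : M.d v (seq (n + m)) = M.d (seq (n + m)) v := M.d_symm _ _
        rw [hsymm] at ht2
        have e1 : r m ω = φR ω - M.d (seq n) (seq (n + m)) ω := by simpa using hc1
        have e2 : s ω = φR ω - M.d (seq n) v ω := by simpa using hc2
        rw [e1, e2, abs_le]
        constructor
        · linarith
        · linarith
      refine lt_of_lt_of_le (hN (n + m) (hm.trans (Nat.le_add_left m n)))
        (measure_le_of_ae_imp ?_)
      filter_upwards [hbound] with ω h1 h2
      exact lt_of_le_of_lt h1 h2
    have hls := hlsc (fun m => seq (n + m)) r v s hi hii hiii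
    filter_upwards [hls, AEEqFun.coeFn_sub φR (M.d (seq n) v), hφRcoe, htop n,
      hbot (seq n)] with ω h1 hc1 hc2 h2 h3
    have e2 : s ω = (φ (seq n) ω).toReal - M.d (seq n) v ω := by
      simpa [hc2] using hc1
    rw [e2] at h1
    have := ereal_coe_sub_le h1
    rwa [EReal.coe_toReal h2.ne h3.ne'] at this
  have hrelx₀v : EkRel M φ x₀ v := by rw [← hseq0]; exact relv 0
  have hvtop : ∀ᵐ ω ∂P, φ v ω < ⊤ := by
    filter_upwards [hrelx₀v, hx₀] with ω h1 h2
    exact ereal_add_coe_lt_top h1 h2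
  refine ⟨v, hvtop, hrelx₀v, ?_⟩
  intro x hxv
  by_contra hcon
  push_neg at hcon
  set A : Set Ω := {ω | φ x ω = ⊤} ∪
    {ω | (φ v ω).toReal < (φ x ω).toReal + M.d x v ω} with hA
  have hAm : MeasurableSet A := by
    refine MeasurableSet.union ?_ ?_
    · exact (φ x).stronglyMeasurable.measurable (measurableSet_singleton ⊤)
    · exact measurableSet_lt (hmg v) ((hmg x).add (hmd x v))
  have hAiff : ∀ᵐ ω ∂P, (ω ∈ A ↔ φ v ω < φ x ω + (M.d x v ω : EReal)) := by
    filter_upwards [hbot x, hbot v, hvtop] with ω h1 h2 h3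
    by_cases hx : φ x ω = ⊤
    · simp only [hA, Set.mem_union, Set.mem_setOf_eq]
      constructor
      · intro _
        have he : φ x ω + (M.d x v ω : EReal) = ⊤ := by
          rw [hx]; exact EReal.top_add_coe _
        rw [he]; exact h3
      · intro _; exact Or.inl hx
    · have h4 : φ v ω < φ x ω + (M.d x v ω : EReal) ↔
          (φ v ω).toReal < (φ x ω).toReal + M.d x v ω := by
        lift (φ x ω) to ℝ using ⟨hx, h1.ne'⟩ with tx htx
        lift (φ v ω) to ℝ using ⟨h3.ne, h2.ne'⟩ with tv htv
        rw [← EReal.coe_add, EReal.coe_lt_coe_iff]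
        simp
      simp only [hA, Set.mem_union, Set.mem_setOf_eq]
      rw [h4]
      simp [hx]
  rcases eq_or_lt_of_le (show (0:ℝ≥0∞) ≤ P A from zero_le) with hPA | hPA
  swap
  · exact hcon A hAm hPA (by filter_upwards [hAiff] with ω h hm; exact not_le.2 (h.1 hm.1) hm.2)
  -- P A = 0 : then x ∈ S(v), and we derive a contradiction with x ≠ v
  have hnotin : ∀ᵐ ω ∂P, ω ∉ A := measure_eq_zero_iff_ae_notMem.1 hPA.symm
  have hrelvx : EkRel M φ v x := by
    have hsymm : M.d v x = M.d x v := M.d_symm _ _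
    filter_upwards [hnotin, hAiff] with ω h1 h2
    rw [hsymm]
    exact not_lt.1 fun hlt => h1 (h2.2 hlt)
  have hrelnx : ∀ n, EkRel M φ (seq n) x := fun n => ekRel_trans (relv n) hrelvx
  have hxtop : ∀ᵐ ω ∂P, φ x ω < ⊤ := by
    filter_upwards [hrelvx, hvtop] with ω h1 h2
    exact ereal_add_coe_lt_top h1 h2
  have hgx : ∀ n : ℕ, ∀ᵐ ω ∂P,
      (φ x ω).toReal + M.d (seq n) x ω ≤ (φ (seq n) ω).toReal := by
    intro n
    filter_upwards [hrelnx n, htop n, hbot x] with ω h1 h2 h3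
    exact ereal_toReal_add_le h1 h3 h2
  -- key claim: d(seq n, x) → 0 in probability (along a subsequence)
  have hclaim : ∀ ε : ℝ, 0 < ε → ∀ lam ∈ Ioo (0:ℝ) 1, ∀ N : ℕ, ∃ n ≥ N,
      ENNReal.ofReal (1 - lam) < P {ω | M.d (seq n) x ω < ε} := by
    intro ε hε lam hlam N
    set U : ℕ → Set Ω := fun K => {ω | (K:ℝ) < |(φ x ω).toReal|} with hU
    have hUm : ∀ K, MeasurableSet (U K) := fun K =>
      measurableSet_lt measurable_const (hmg x).abs
    have hUanti : Antitone U := by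
      intro K K' hKK ω hω
      exact lt_of_le_of_lt (show (K:ℝ) ≤ (K':ℝ) by exact_mod_cast hKK) hω
    have hUint : (⋂ K, U K) = ∅ := by
      ext ω
      simp only [Set.mem_iInter, Set.mem_empty_iff_false, iff_false, not_forall]
      obtain ⟨K, hK⟩ := exists_nat_gt |(φ x ω).toReal|
      exact ⟨K, by simp only [hU, Set.mem_setOf_eq, not_lt]; exact hK.le⟩
    have hUten : Tendsto (fun K => P (U K)) atTop (nhds 0) := by
      have h := tendsto_measure_iInter_atTop (μ := P) (fun K => (hUm K).nullMeasurableSet)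
        hUanti ⟨0, measure_ne_top P _⟩
      rw [hUint] at h
      simpa [Function.comp_def] using h
    have h4pos : (0:ℝ) < lam / 4 := by linarith [hlam.1]
    obtain ⟨K, hK⟩ := (hUten.eventually
      (gt_mem_nhds (ENNReal.ofReal_pos.2 h4pos))).exists
    have hKnn : (0:ℝ) ≤ (K:ℝ) := Nat.cast_nonneg K
    obtain ⟨t₀, ht₀, hmin⟩ := isCompact_Icc.exists_isMinOn
      (Set.nonempty_Icc.2 (by linarith : -(K:ℝ) ≤ (K:ℝ)))
      (Continuous.continuousOn (by continuity :
        Continuous fun t : ℝ => Real.arctan (t + ε) - Real.arctan t))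
    set δ : ℝ := Real.arctan (t₀ + ε) - Real.arctan t₀ with hδ
    have hδpos : 0 < δ := sub_pos.2 (Real.arctan_strictMono (by linarith))
    obtain ⟨m₀, hm₀⟩ := exists_pow_lt_of_lt_one
      (by positivity : (0:ℝ) < δ * (lam / 4)) (by norm_num : (2:ℝ)⁻¹ < 1)
    set m := max m₀ N with hm
    have hpow : (2:ℝ)⁻¹ ^ m < δ * (lam / 4) :=
      lt_of_le_of_lt (pow_le_pow_of_le_one (by norm_num) (by norm_num)
        (le_max_left _ _)) hm₀
    refine ⟨m + 1, le_trans (le_max_right m₀ N) (Nat.le_succ m), ?_⟩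
    set hdiff : Ω → ℝ := fun ω =>
      Real.arctan ((φ (seq (m+1)) ω).toReal) - Real.arctan ((φ x ω).toReal) with hhd
    have hdnneg : 0 ≤ᵐ[P] hdiff := by
      filter_upwards [hgx (m+1), M.d_nonneg (seq (m+1)) x] with ω h1 h2
      simp only [hhd, Pi.zero_apply, sub_nonneg]
      exact Real.arctan_strictMono.monotone (by linarith)
    have hdint : Integrable hdiff P := (hint (seq (m+1))).sub (hint x)
    have hintle : ∫ ω, hdiff ω ∂P ≤ (2:ℝ)⁻¹ ^ m := by
      have heq : ∫ ω, hdiff ω ∂P = F (seq (m+1)) - F x := by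
        simp only [hhd, hF]
        exact integral_sub (hint (seq (m+1))) (hint x)
      have hle := (hseqP m).2 x (hrelnx m)
      rw [heq]
      linarith
    have hmarkov := mul_meas_ge_le_integral_of_nonneg hdnneg hdint δ
    have hPd : P {ω | δ ≤ hdiff ω} ≤ ENNReal.ofReal (lam / 4) := by
      refine le_of_lt ((ENNReal.lt_ofReal_iff_toReal_lt (measure_ne_top P _)).2 ?_)
      have h2 : δ * (P {ω | δ ≤ hdiff ω}).toReal < δ * (lam/4) :=
        lt_of_le_of_lt (hmarkov.trans hintle) hpow
      exact lt_of_mul_lt_mul_left h2 hδpos.le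
    by_contra hle
    push_neg at hle
    have hcover : ∀ᵐ ω ∂P, ω ∈ {ω | M.d (seq (m+1)) x ω < ε} ∪
        ({ω | δ ≤ hdiff ω} ∪ U K) := by
      filter_upwards [hgx (m+1)] with ω h1
      by_cases hd : M.d (seq (m+1)) x ω < ε
      · exact Or.inl hd
      · by_cases hKm : (K:ℝ) < |(φ x ω).toReal|
        · exact Or.inr (Or.inr hKm)
        · refine Or.inr (Or.inl ?_)
          push_neg at hd hKm
          have habs := abs_le.1 hKm
          have hδle : δ ≤ Real.arctan ((φ x ω).toReal + ε) -
              Real.arctan ((φ x ω).toReal) := isMinOn_iff.1 hmin _ ⟨habs.1, habs.2⟩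
          have hup : Real.arctan ((φ x ω).toReal + ε) ≤
              Real.arctan ((φ (seq (m+1)) ω).toReal) :=
            Real.arctan_strictMono.monotone (by linarith)
          simp only [Set.mem_setOf_eq, hhd]
          linarith
    have h1le : (1:ℝ≥0∞) ≤ ENNReal.ofReal (1 - lam) +
        (ENNReal.ofReal (lam/4) + ENNReal.ofReal (lam/4)) := by
      calc (1:ℝ≥0∞) = P univ := measure_univ.symm
        _ ≤ P ({ω | M.d (seq (m+1)) x ω < ε} ∪ ({ω | δ ≤ hdiff ω} ∪ U K)) :=
            measure_le_of_ae_imp (by filter_upwards [hcover] with ω h _; exact h)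
        _ ≤ P {ω | M.d (seq (m+1)) x ω < ε} + P ({ω | δ ≤ hdiff ω} ∪ U K) :=
            measure_union_le _ _
        _ ≤ P {ω | M.d (seq (m+1)) x ω < ε} + (P {ω | δ ≤ hdiff ω} + P (U K)) :=
            add_le_add_right (measure_union_le _ _) _
        _ ≤ ENNReal.ofReal (1 - lam) + (ENNReal.ofReal (lam/4) + ENNReal.ofReal (lam/4)) :=
            add_le_add hle (add_le_add hPd hK.le)
    rw [← ENNReal.ofReal_add h4pos.le h4pos.le,
      ← ENNReal.ofReal_add (by linarith [hlam.2]) (by linarith)] at h1le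
    have hlt : ENNReal.ofReal (1 - lam + (lam/4 + lam/4)) < 1 := by
      rw [← ENNReal.ofReal_one]
      exact (ENNReal.ofReal_lt_ofReal_iff_of_nonneg (by linarith [hlam.2])).2
        (by linarith [hlam.1])
    exact absurd h1le (not_le.2 hlt)
  -- conclude d(x,v) = 0 a.s., contradicting x ≠ v
  have hdv : ∀ ε : ℝ, 0 < ε → ∀ lam ∈ Ioo (0:ℝ) 1,
      ENNReal.ofReal (1 - lam) < P {ω | M.d x v ω < ε} := by
    intro ε hε lam hlam
    have hlam3 : lam / 3 ∈ Ioo (0:ℝ) 1 := ⟨by linarith [hlam.1], by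
      have := hlam.1; have := hlam.2; linarith⟩
    obtain ⟨N, hN⟩ := hv (ε/2) (by linarith) (lam/3) hlam3
    obtain ⟨n, hnN, hn⟩ := hclaim (ε/2) (by linarith) (lam/3) hlam3 N
    have hNn := hN n hnN
    by_contra hle
    push_neg at hle
    have hcov : ∀ᵐ ω ∂P, ω ∈ {ω | M.d x v ω < ε} ∪
        ({ω | M.d (seq n) x ω < ε/2}ᶜ ∪ {ω | M.d (seq n) v ω < ε/2}ᶜ) := by
      filter_upwards [M.d_triangle x (seq n) v] with ω htri
      by_cases h1 : M.d (seq n) x ω < ε/2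
      · by_cases h2 : M.d (seq n) v ω < ε/2
        · refine Or.inl ?_
          have hsymm : M.d x (seq n) = M.d (seq n) x := M.d_symm _ _
          rw [hsymm] at htri
          simp only [Set.mem_setOf_eq]
          linarith
        · exact Or.inr (Or.inr h2)
      · exact Or.inr (Or.inl h1)
    have hms : ∀ (p q : E) (c : ℝ), MeasurableSet {ω | M.d p q ω < c} := fun p q c =>
      measurableSet_lt (hmd p q) measurable_const
    have hc1 : P {ω | M.d (seq n) x ω < ε/2}ᶜ ≤ ENNReal.ofReal (lam/3) := by
      rw [prob_compl_eq_one_sub (hms _ _ _)]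
      calc (1:ℝ≥0∞) - P {ω | M.d (seq n) x ω < ε/2}
          ≤ 1 - ENNReal.ofReal (1 - lam/3) := tsub_le_tsub_left hn.le 1
        _ = ENNReal.ofReal (lam/3) := by
            rw [← ENNReal.ofReal_one,
              ← ENNReal.ofReal_sub 1 (by linarith [hlam3.2] : (0:ℝ) ≤ 1 - lam/3)]
            norm_num
    have hc2 : P {ω | M.d (seq n) v ω < ε/2}ᶜ ≤ ENNReal.ofReal (lam/3) := by
      rw [prob_compl_eq_one_sub (hms _ _ _)]
      calc (1:ℝ≥0∞) - P {ω | M.d (seq n) v ω < ε/2}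
          ≤ 1 - ENNReal.ofReal (1 - lam/3) := tsub_le_tsub_left hNn.le 1
        _ = ENNReal.ofReal (lam/3) := by
            rw [← ENNReal.ofReal_one,
              ← ENNReal.ofReal_sub 1 (by linarith [hlam3.2] : (0:ℝ) ≤ 1 - lam/3)]
            norm_num
    have h1le : (1:ℝ≥0∞) ≤ ENNReal.ofReal (1 - lam) +
        (ENNReal.ofReal (lam/3) + ENNReal.ofReal (lam/3)) := by
      calc (1:ℝ≥0∞) = P univ := measure_univ.symm
        _ ≤ P ({ω | M.d x v ω < ε} ∪
            ({ω | M.d (seq n) x ω < ε/2}ᶜ ∪ {ω | M.d (seq n) v ω < ε/2}ᶜ)) :=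
            measure_le_of_ae_imp (by filter_upwards [hcov] with ω h _; exact h)
        _ ≤ P {ω | M.d x v ω < ε} +
            P ({ω | M.d (seq n) x ω < ε/2}ᶜ ∪ {ω | M.d (seq n) v ω < ε/2}ᶜ) :=
            measure_union_le _ _
        _ ≤ P {ω | M.d x v ω < ε} +
            (P {ω | M.d (seq n) x ω < ε/2}ᶜ + P {ω | M.d (seq n) v ω < ε/2}ᶜ) :=
            add_le_add_right (measure_union_le _ _) _
        _ ≤ ENNReal.ofReal (1 - lam) + (ENNReal.ofReal (lam/3) + ENNReal.ofReal (lam/3)) :=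
            add_le_add hle (add_le_add hc1 hc2)
    have h3pos : (0:ℝ) < lam / 3 := hlam3.1
    rw [← ENNReal.ofReal_add h3pos.le h3pos.le,
      ← ENNReal.ofReal_add (by linarith [hlam.2]) (by linarith)] at h1le
    have hlt : ENNReal.ofReal (1 - lam + (lam/3 + lam/3)) < 1 := by
      rw [← ENNReal.ofReal_one]
      exact (ENNReal.ofReal_lt_ofReal_iff_of_nonneg (by linarith [hlam.2])).2
        (by linarith [hlam.1])
    exact absurd h1le (not_le.2 hlt)
  have hzero : ∀ ε : ℝ, 0 < ε → ∀ᵐ ω ∂P, M.d x v ω < ε := by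
    intro ε hε
    have hms : MeasurableSet {ω | M.d x v ω < ε} :=
      measurableSet_lt (hmd x v) measurable_const
    have hone : P {ω | M.d x v ω < ε} = 1 := by
      by_contra hne
      have hlt : P {ω | M.d x v ω < ε} < 1 := lt_of_le_of_ne prob_le_one hne
      set q := (P {ω | M.d x v ω < ε}).toReal with hq
      have hqlt : q < 1 := by
        have := (ENNReal.toReal_lt_toReal (measure_ne_top P _) one_ne_top).2 hlt
        simpa using this
      have hq0 : 0 ≤ q := ENNReal.toReal_nonneg
      have hlam : (1 - q)/2 ∈ Ioo (0:ℝ) 1 := ⟨by linarith, by linarith⟩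
      have hd := hdv ε hε ((1-q)/2) hlam
      rw [show P {ω | M.d x v ω < ε} = ENNReal.ofReal q from
        (ENNReal.ofReal_toReal (measure_ne_top P _)).symm] at hd
      have hlt2 : (1:ℝ) - (1-q)/2 < q :=
        (ENNReal.ofReal_lt_ofReal_iff_of_nonneg (by linarith)).1 hd
      linarith
    rw [ae_iff]
    have heq : {ω | ¬ M.d x v ω < ε} = {ω | M.d x v ω < ε}ᶜ := rfl
    rw [heq, prob_compl_eq_one_sub hms, hone, tsub_self]
  have hae0 : ∀ᵐ ω ∂P, M.d x v ω = 0 := by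
    have hall : ∀ᵐ ω ∂P, ∀ k : ℕ, M.d x v ω < 1/((k:ℝ)+1) :=
      ae_all_iff.2 fun k => hzero _ (by positivity)
    filter_upwards [hall, M.d_nonneg x v] with ω h1 h2
    refine le_antisymm ?_ h2
    by_contra hpos
    push_neg at hpos
    obtain ⟨k, hk⟩ := exists_nat_one_div_lt hpos
    exact absurd (h1 k) (not_lt.2 hk.le)
  have hd0 : M.d x v = 0 := by
    refine AEEqFun.ext ?_
    filter_upwards [hae0, AEEqFun.coeFn_zero (β := ℝ) (μ := P)] with ω h1 h2
    rw [h1, h2]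
    simp
  exact hxv ((M.d_eq_zero_iff x v).1 hd0)


end GYY
end

section
/- Let (E,d) be a d_{ε,λ}-complete random metric space with base (Ω,𝓕,P) and φ : E → L̄⁰(𝓕) a proper, 𝒯_{ε,λ}-lower semicontinuous function which is bounded from below. Then there exists v ∈ E such that for every x ∈ E with x ≠ v, φ(x) ≰ φ(v) − d(x,v), i.e. there exists A_x ∈ 𝓕 with P(A_x) > 0 such that φ(x) > φ(v) − d(x,v) a.s. on A_x. -/
open MeasureTheory ENNReal Set Filter

namespace GYY

variable {Ω : Type*} [MeasurableSpace Ω]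

section EkelandAux

variable {Ω : Type*} [MeasurableSpace Ω] {P : Measure Ω} {E : Type*}

/-- Auxiliary Ekeland order: `y ⪯ x` iff `φ(y) + d(y,x) ≤ φ(x)` a.s. -/
def EkPrec (M : RMSpace P E) (φ : E → L0e P) (y x : E) : Prop :=
  ∀ᵐ ω ∂P, φ y ω + (M.d y x ω : EReal) ≤ φ x ω

/-- `φ(x)` is a.s. real-valued. -/
def EkGood (φ : E → L0e P) (x : E) : Prop :=
  ∀ᵐ ω ∂P, φ x ω ≠ ⊥ ∧ φ x ω ≠ ⊤

/-- Bounded strictly monotone transform on the reals. -/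
noncomputable def ekU : EReal → ℝ := fun t => Real.arctan t.toReal

lemma ekU_abs (t : EReal) : |ekU t| ≤ 2 := by
  rw [abs_le]
  unfold ekU
  constructor
  · nlinarith [Real.neg_pi_div_two_lt_arctan t.toReal, Real.pi_le_four]
  · nlinarith [Real.arctan_lt_pi_div_two t.toReal, Real.pi_le_four]

/-- Scalarization of `φ`. -/
noncomputable def ekF (φ : E → L0e P) (y : E) : ℝ := ∫ ω, ekU (φ y ω) ∂P

lemma ekInt (φ : E → L0e P) [IsProbabilityMeasure P] (y : E) :
    Integrable (fun ω => ekU (φ y ω)) P := by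
  have hm : AEMeasurable (fun ω => ekU (φ y ω)) P :=
    (Real.continuous_arctan.measurable.comp measurable_ereal_toReal).comp_aemeasurable
      (φ y).aestronglyMeasurable.aemeasurable
  refine Integrable.mono' (integrable_const 2) hm.aestronglyMeasurable ?_
  exact ae_of_all _ fun ω => ekU_abs _

lemma ekF_ge (φ : E → L0e P) [IsProbabilityMeasure P] (y : E) : -2 ≤ ekF φ y := by
  have h : ∫ (_ : Ω), (-2 : ℝ) ∂P ≤ ekF φ y :=
    integral_mono_ae (integrable_const _) (ekInt φ y)
      (ae_of_all _ fun ω => (abs_le.1 (ekU_abs _)).1)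
  simpa using h

lemma ekPrec_refl (M : RMSpace P E) (φ : E → L0e P) (x : E) : EkPrec M φ x x := by
  have h0 : M.d x x = 0 := (M.d_eq_zero_iff x x).2 rfl
  have h1 : ∀ᵐ ω ∂P, M.d x x ω = 0 := by
    rw [h0]; exact AEEqFun.coeFn_zero
  filter_upwards [h1] with ω hω
  rw [hω]
  simp

lemma ekPrec_trans (M : RMSpace P E) (φ : E → L0e P) {z y x : E}
    (h1 : EkPrec M φ z y) (h2 : EkPrec M φ y x) : EkPrec M φ z x := by
  filter_upwards [h1, h2, M.d_triangle z y x] with ω hzy hyx htri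
  calc φ z ω + (M.d z x ω : EReal)
      ≤ φ z ω + ((M.d z y ω + M.d y x ω : ℝ) : EReal) := by
        exact add_le_add_right (by exact_mod_cast htri) _
    _ = (φ z ω + (M.d z y ω : EReal)) + (M.d y x ω : EReal) := by
        rw [EReal.coe_add, add_assoc]
    _ ≤ φ y ω + (M.d y x ω : EReal) := add_le_add_left hzy _
    _ ≤ φ x ω := hyx

lemma ekPrec_le (M : RMSpace P E) (φ : E → L0e P) {y x : E}
    (h : EkPrec M φ y x) : ∀ᵐ ω ∂P, φ y ω ≤ φ x ω := by
  filter_upwards [h, M.d_nonneg y x] with ω h1 h2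
  exact le_trans (le_add_of_nonneg_right (by exact_mod_cast h2)) h1

lemma ekGood_of (M : RMSpace P E) (φ : E → L0e P) {y x : E}
    (h : EkPrec M φ y x) (hx : EkGood φ x) (hb : ∀ᵐ ω ∂P, ⊥ < φ y ω) : EkGood φ y := by
  filter_upwards [ekPrec_le M φ h, hx, hb] with ω h1 h2 h3
  exact ⟨h3.ne', (h1.trans_lt (lt_top_iff_ne_top.2 h2.2)).ne⟩

lemma ekReal (φ : E → L0e P) (y : E) (h : EkGood φ y) :
    ∃ ζ : L0 P, ∀ᵐ ω ∂P, (ζ ω : EReal) = φ y ω := by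
  have hm : AEMeasurable (fun ω => (φ y ω).toReal) P :=
    (φ y).aestronglyMeasurable.aemeasurable.ereal_toReal
  refine ⟨AEEqFun.mk _ hm.aestronglyMeasurable, ?_⟩
  filter_upwards [AEEqFun.coeFn_mk _ hm.aestronglyMeasurable, h] with ω h1 h2
  rw [h1]
  exact EReal.coe_toReal h2.2 h2.1

lemma ekF_mono (φ : E → L0e P) [IsProbabilityMeasure P] {y z : E}
    (hy : EkGood φ y) (hz : EkGood φ z) (h : ∀ᵐ ω ∂P, φ y ω ≤ φ z ω) :
    ekF φ y ≤ ekF φ z := by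
  refine integral_mono_ae (ekInt φ y) (ekInt φ z) ?_
  filter_upwards [hy, hz, h] with ω h1 h2 h3
  exact Real.arctan_strictMono.monotone (EReal.toReal_le_toReal h3 h1.1 h2.2)

/-- A measurable representative of an element of `L⁰`. -/
lemma ekMk {γ : Type*} [TopologicalSpace γ] [TopologicalSpace.PseudoMetrizableSpace γ]
    [MeasurableSpace γ] [BorelSpace γ] (f : Ω →ₘ[P] γ) :
    ∃ g : Ω → γ, Measurable g ∧ ∀ᵐ ω ∂P, f ω = g ω :=
  ⟨_, f.aestronglyMeasurable.aemeasurable.measurable_mk,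
    f.aestronglyMeasurable.aemeasurable.ae_eq_mk⟩

end EkelandAux

/-- Theorem 2.11. There exists `v ∈ E` such that
`φ(x) ≰ φ(v) - d(x,v)` for all `x ≠ v`, i.e. for each `x ≠ v` there is `A_x ∈ 𝓕` with
`P(A_x) > 0` and `φ(x) > φ(v) - d(x,v)` a.s. on `A_x`. -/
theorem ekeland_RM_EL'
    {Ω : Type*} [MeasurableSpace Ω] {P : Measure Ω} [IsProbabilityMeasure P]
    {E : Type*} (M : RMSpace P E) (hcomp : M.CompleteEL)
    (φ : E → L0e P)
    (hproper : ProperOn φ Set.univ) (hlsc : M.LscEL φ) (hbdd : BddBelowOn φ Set.univ) :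
    ∃ v : E, ∀ x : E, x ≠ v → ∃ A : Set Ω, MeasurableSet A ∧ 0 < P A ∧
      ∀ᵐ ω ∂P, ω ∈ A → φ v ω < φ x ω + (M.d x v ω : EReal) := by
  classical
  have hbot : ∀ x, ∀ᵐ ω ∂P, ⊥ < φ x ω := fun x => hproper.1 x (Set.mem_univ x)
  obtain ⟨x0, -, hx0top⟩ := hproper.2
  obtain ⟨ξ, hξ'⟩ := hbdd
  have hξ : ∀ x, ∀ᵐ ω ∂P, (ξ ω : EReal) ≤ φ x ω := fun x => hξ' x (Set.mem_univ x)
  have hgood0 : EkGood φ x0 := by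
    filter_upwards [hbot x0, hx0top] with ω h1 h2
    exact ⟨h1.ne', h2.ne⟩
  set S : E → Set E := fun x => {y | EkPrec M φ y x} with hS
  have hbddS : ∀ x : E, BddBelow (ekF φ '' S x) := by
    intro x
    refine ⟨-2, ?_⟩
    rintro a ⟨y, hy, rfl⟩
    exact ekF_ge φ y
  have hstep : ∀ x : E, EkGood φ x → ∀ c : ℝ, 0 < c →
      ∃ y, EkPrec M φ y x ∧ ekF φ y ≤ sInf (ekF φ '' S x) + c := by
    intro x hx c hc
    have hne : (S x).Nonempty := ⟨x, ekPrec_refl M φ x⟩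
    obtain ⟨a, ⟨y, hy, rfl⟩, hlt⟩ :=
      exists_lt_of_csInf_lt (hne.image (ekF φ)) (lt_add_of_pos_right _ hc)
    exact ⟨y, hy, hlt.le⟩
  choose stepf hstep1 hstep2 using hstep
  -- the recursively chosen sequence
  let f : ℕ → {p : E // EkGood φ p} := fun n =>
    Nat.rec (motive := fun _ => {p : E // EkGood φ p}) ⟨x0, hgood0⟩
      (fun n p => ⟨stepf p.1 p.2 ((1/2 : ℝ)^n) (by positivity),
        ekGood_of M φ (hstep1 p.1 p.2 _ (by positivity)) p.2 (hbot _)⟩) n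
  let xs : ℕ → E := fun n => (f n).1
  have hgood : ∀ n, EkGood φ (xs n) := fun n => (f n).2
  have hPrec : ∀ n, EkPrec M φ (xs (n+1)) (xs n) := fun n =>
    hstep1 (f n).1 (f n).2 ((1/2 : ℝ)^n) (by positivity)
  have hFle : ∀ n, ekF φ (xs (n+1)) ≤ sInf (ekF φ '' S (xs n)) + (1/2 : ℝ)^n := fun n =>
    hstep2 (f n).1 (f n).2 ((1/2 : ℝ)^n) (by positivity)
  have hchain : ∀ n m, n ≤ m → EkPrec M φ (xs m) (xs n) := by
    intro n m hnm
    induction m, hnm using Nat.le_induction with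
    | base => exact ekPrec_refl M φ _
    | succ m hm ih => exact ekPrec_trans M φ (hPrec m) ih
  -- real-valued versions of `φ (xs n)`
  choose ζ hζ using fun n => ekReal φ (xs n) (hgood n)
  have hdle : ∀ n m, n ≤ m → ∀ᵐ ω ∂P, M.d (xs m) (xs n) ω + ζ m ω ≤ ζ n ω := by
    intro n m hnm
    filter_upwards [hchain n m hnm, hζ n, hζ m] with ω h1 h2 h3
    rw [← h2, ← h3, ← EReal.coe_add] at h1
    have := EReal.coe_le_coe_iff.1 h1
    linarith
  have hξζ : ∀ n, ∀ᵐ ω ∂P, ξ ω ≤ ζ n ω := by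
    intro n
    filter_upwards [hξ (xs n), hζ n] with ω h1 h2
    rw [← h2] at h1
    exact EReal.coe_le_coe_iff.1 h1
  -- measurable versions
  choose z hzm hz using fun n => ekMk (ζ n)
  obtain ⟨zξ, hzξm, hzξ⟩ := ekMk ξ
  -- the good full-measure set
  set T : Set Ω := {ω | (∀ p : ℕ × ℕ, p.1 ≤ p.2 → M.d (xs p.2) (xs p.1) ω ≤ z p.1 ω - z p.2 ω)
      ∧ (∀ n, zξ ω ≤ z n ω) ∧ (∀ p : ℕ × ℕ, 0 ≤ M.d (xs p.1) (xs p.2) ω)} with hT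
  have hTae : ∀ᵐ ω ∂P, ω ∈ T := by
    have h1 : ∀ᵐ ω ∂P, ∀ p : ℕ × ℕ, p.1 ≤ p.2 →
        M.d (xs p.2) (xs p.1) ω ≤ z p.1 ω - z p.2 ω := by
      rw [ae_all_iff]
      intro p
      by_cases hp : p.1 ≤ p.2
      · filter_upwards [hdle p.1 p.2 hp, hz p.1, hz p.2] with ω ha hb hc hp'
        rw [← hb, ← hc]; linarith
      · filter_upwards [] with ω hp'
        exact absurd hp' hp
    have h2 : ∀ᵐ ω ∂P, ∀ n, zξ ω ≤ z n ω := by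
      rw [ae_all_iff]
      intro n
      filter_upwards [hξζ n, hzξ, hz n] with ω ha hb hc
      rw [← hb, ← hc]; exact ha
    have h3 : ∀ᵐ ω ∂P, ∀ p : ℕ × ℕ, 0 ≤ M.d (xs p.1) (xs p.2) ω := by
      rw [ae_all_iff]
      intro p
      exact M.d_nonneg (xs p.1) (xs p.2)
    filter_upwards [h1, h2, h3] with ω ha hb hc
    exact ⟨ha, hb, hc⟩
  have hTanti : ∀ ω ∈ T, ∀ a b : ℕ, a ≤ b → z b ω ≤ z a ω := by
    intro ω hω a b hab
    have h1 : M.d (xs b) (xs a) ω ≤ z a ω - z b ω := hω.1 (a, b) hab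
    have h2 : 0 ≤ M.d (xs b) (xs a) ω := hω.2.2 (b, a)
    linarith
  have hTbdd : ∀ ω ∈ T, BddBelow (Set.range fun k => z k ω) := by
    intro ω hω
    exact ⟨zξ ω, by rintro _ ⟨k, rfl⟩; exact hω.2.1 k⟩
  set L : Ω → ℝ := fun ω => ⨅ k, z k ω with hL
  -- Cauchy
  have hcauchy : M.CauchySeqEL xs := by
    intro ε hε lam hlam
    set G : ℕ → Set Ω := fun N => T ∩ {ω | z N ω - L ω < ε} with hG
    have hmonoG : Monotone G := by
      intro a b hab ω hω
      obtain ⟨hωT, hωz⟩ := hω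
      refine ⟨hωT, ?_⟩
      have := hTanti ω hωT a b hab
      simp only [Set.mem_setOf_eq] at hωz ⊢
      linarith
    have hUnion : T ⊆ ⋃ N, G N := by
      intro ω hω
      have htend : Filter.Tendsto (fun k => z k ω) Filter.atTop (nhds (L ω)) :=
        tendsto_atTop_ciInf (fun a b h => hTanti ω hω a b h) (hTbdd ω hω)
      have hev : ∀ᶠ N in Filter.atTop, z N ω < L ω + ε :=
        htend.eventually_lt_const (by linarith)
      obtain ⟨N, hN⟩ := hev.exists
      exact Set.mem_iUnion.2 ⟨N, hω, by simp only [Set.mem_setOf_eq]; linarith⟩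
    have hPU : ENNReal.ofReal (1 - lam) < P (⋃ N, G N) := by
      have h1 : (1 : ℝ≥0∞) ≤ P (⋃ N, G N) := by
        calc (1 : ℝ≥0∞) = P Set.univ := (measure_univ).symm
          _ ≤ P T := measure_mono_ae (by filter_upwards [hTae] with ω h _; exact h)
          _ ≤ P (⋃ N, G N) := measure_mono hUnion
      exact lt_of_lt_of_le (ENNReal.ofReal_lt_one.2 (by linarith [hlam.1])) h1
    have htendP := tendsto_measure_iUnion_atTop (μ := P) hmonoG
    obtain ⟨N, hN⟩ := (htendP.eventually_const_lt hPU).exists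
    refine ⟨N, ?_⟩
    have key : ∀ m n : ℕ, n ≤ m → N ≤ n →
        ENNReal.ofReal (1 - lam) < P {ω | M.d (xs m) (xs n) ω < ε} := by
      intro m n hnm hNn
      refine lt_of_lt_of_le hN (measure_mono ?_)
      rintro ω ⟨hωT, hωz⟩
      simp only [Set.mem_setOf_eq] at hωz ⊢
      have h1 : M.d (xs m) (xs n) ω ≤ z n ω - z m ω := hωT.1 (n, m) hnm
      have h2 : z n ω ≤ z N ω := hTanti ω hωT N n hNn
      have h3 : L ω ≤ z m ω := ciInf_le (hTbdd ω hωT) m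
      linarith
    intro m hm n hn
    rcases le_total n m with h | h
    · exact key m n h hn
    · rw [M.d_symm]
      exact key n m h hm
  obtain ⟨v, hv⟩ := hcomp xs hcauchy
  -- v is below every xs n
  have hPrecv : ∀ n, EkPrec M φ v (xs n) := by
    intro n
    set r : ℕ → L0 P := fun m => ζ n - M.d (xs (n+m)) (xs n) with hr'
    set s : L0 P := ζ n - M.d v (xs n) with hs'
    have hr : ∀ m, ∀ᵐ ω ∂P, φ (xs (n+m)) ω ≤ ((r m) ω : EReal) := by
      intro m
      filter_upwards [hζ (n+m), hdle n (n+m) (Nat.le_add_right n m),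
        AEEqFun.coeFn_sub (ζ n) (M.d (xs (n+m)) (xs n))] with ω h1 h2 h3
      rw [← h1, hr']
      simp only [h3, Pi.sub_apply]
      exact EReal.coe_le_coe_iff.2 (by linarith)
    have hxel : M.TendstoEL (fun m => xs (n+m)) v := by
      intro ε hε lam hlam
      obtain ⟨N, hN⟩ := hv ε hε lam hlam
      exact ⟨N, fun m hm => hN (n+m) (le_trans hm (Nat.le_add_left m n))⟩
    have hrs : TendstoProb P r s := by
      intro ε hε lam hlam
      obtain ⟨N, hN⟩ := hv ε hε lam hlam
      refine ⟨N, fun m hm => ?_⟩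
      refine lt_of_lt_of_le (hN (n+m) (le_trans hm (Nat.le_add_left m n)))
        (measure_mono_ae ?_)
      have htri2 := M.d_triangle v (xs (n+m)) (xs n)
      rw [M.d_symm v (xs (n+m))] at htri2
      filter_upwards [AEEqFun.coeFn_sub (ζ n) (M.d (xs (n+m)) (xs n)),
        AEEqFun.coeFn_sub (ζ n) (M.d v (xs n)),
        M.d_triangle (xs (n+m)) v (xs n), htri2] with ω h1 h2 h3 h4 hin
      have hin' : M.d (xs (n+m)) v ω < ε := hin
      have hrw : r m ω - s ω = M.d v (xs n) ω - M.d (xs (n+m)) (xs n) ω := by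
        rw [hr', hs']
        simp only [h1, h2, Pi.sub_apply]
        ring
      show |r m ω - s ω| < ε
      rw [hrw, abs_lt]
      constructor <;> linarith [hin']
    have hconc := hlsc (fun m => xs (n+m)) r v s hr hxel hrs
    filter_upwards [hconc, AEEqFun.coeFn_sub (ζ n) (M.d v (xs n)), hζ n] with ω h1 h2 h3
    rw [hs'] at h1
    simp only [h2, Pi.sub_apply] at h1
    calc φ v ω + (M.d v (xs n) ω : EReal)
        ≤ ((ζ n ω - M.d v (xs n) ω : ℝ) : EReal) + (M.d v (xs n) ω : EReal) :=
          add_le_add_left h1 _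
      _ = ((ζ n ω - M.d v (xs n) ω + M.d v (xs n) ω : ℝ) : EReal) := (EReal.coe_add _ _).symm
      _ = ((ζ n ω : ℝ) : EReal) := by rw [sub_add_cancel]
      _ = φ (xs n) ω := h3
  have hgoodv : EkGood φ v := ekGood_of M φ (hPrecv 0) (hgood 0) (hbot v)
  obtain ⟨ζv, hζv⟩ := ekReal φ v hgoodv
  refine ⟨v, fun x hxv => ?_⟩
  by_contra hcon
  simp only [not_exists, not_and] at hcon
  -- measurable versions
  obtain ⟨gx, hgxm, hgx⟩ := ekMk (φ x)
  obtain ⟨zv, hzvm, hzv⟩ := ekMk ζv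
  obtain ⟨gd, hgdm, hgd⟩ := ekMk (M.d x v)
  set B : Set Ω := {ω | gx ω = ⊤} ∪ ({ω | gx ω = ⊤}ᶜ ∩ {ω | zv ω < (gx ω).toReal + gd ω})
    with hB
  have hBm : MeasurableSet B := by
    have h1 : MeasurableSet {ω | gx ω = ⊤} := hgxm (measurableSet_singleton ⊤)
    exact h1.union (h1.compl.inter (measurableSet_lt hzvm (hgxm.ereal_toReal.add hgdm)))
  have hprec_xv : EkPrec M φ x v := by
    by_cases hPB : P B = 0
    · have hBc : ∀ᵐ ω ∂P, ω ∉ B := by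
        rw [ae_iff]
        simpa using hPB
      filter_upwards [hBc, hgx, hzv, hζv, hgd, hbot x] with ω h1 h2 h3 h4 h5 h6
      have hxt : gx ω ≠ ⊤ := fun h => h1 (Or.inl h)
      have hnlt : ¬ (zv ω < (gx ω).toReal + gd ω) := fun h => h1 (Or.inr ⟨fun h' => hxt h', h⟩)
      have hxb : gx ω ≠ ⊥ := by rw [← h2]; exact h6.ne'
      have hle : (gx ω).toReal + gd ω ≤ zv ω := not_lt.1 hnlt
      calc φ x ω + (M.d x v ω : EReal)
          = ((gx ω).toReal : EReal) + (gd ω : EReal) := by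
            rw [h2, h5, EReal.coe_toReal hxt hxb]
        _ = (((gx ω).toReal + gd ω : ℝ) : EReal) := (EReal.coe_add _ _).symm
        _ ≤ ((zv ω : ℝ) : EReal) := EReal.coe_le_coe_iff.2 hle
        _ = ((ζv ω : ℝ) : EReal) := by rw [h3]
        _ = φ v ω := h4
    · exfalso
      refine hcon B hBm (pos_iff_ne_zero.2 hPB) ?_
      filter_upwards [hgx, hzv, hζv, hgd, hbot x] with ω h2 h3 h4 h5 h6 hωB
      have hφv : φ v ω = ((zv ω : ℝ) : EReal) := by rw [← h4, h3]
      rcases hωB with htop | ⟨hne, hlt⟩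
      · rw [h2, htop, h5, EReal.top_add_coe, hφv]
        exact EReal.coe_lt_top _
      · have hxt : gx ω ≠ ⊤ := hne
        have hxb : gx ω ≠ ⊥ := by rw [← h2]; exact h6.ne'
        simp only [Set.mem_setOf_eq] at hlt
        calc φ v ω = ((zv ω : ℝ) : EReal) := hφv
          _ < (((gx ω).toReal + gd ω : ℝ) : EReal) := by exact_mod_cast hlt
          _ = ((gx ω).toReal : EReal) + (gd ω : EReal) := EReal.coe_add _ _
          _ = φ x ω + (M.d x v ω : EReal) := by
            rw [EReal.coe_toReal hxt hxb, h2, h5]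
  have hgoodx : EkGood φ x := ekGood_of M φ hprec_xv hgoodv (hbot x)
  obtain ⟨ζx, hζx⟩ := ekReal φ x hgoodx
  have hSx : ∀ n, EkPrec M φ x (xs n) := fun n => ekPrec_trans M φ hprec_xv (hPrecv n)
  have hFvx : ekF φ v ≤ ekF φ x := by
    refine le_of_forall_pos_le_add fun ε hε => ?_
    obtain ⟨n, hn⟩ := exists_pow_lt_of_lt_one hε (by norm_num : (1/2 : ℝ) < 1)
    have h1 : ekF φ v ≤ ekF φ (xs (n+1)) :=
      ekF_mono φ hgoodv (hgood (n+1)) (ekPrec_le M φ (hPrecv (n+1)))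
    have h2 : sInf (ekF φ '' S (xs n)) ≤ ekF φ x := csInf_le (hbddS _) ⟨x, hSx n, rfl⟩
    linarith [hFle n]
  -- conclude d(x,v) = 0
  have hint2 : Integrable (fun ω => Real.arctan (ζx ω)) P := by
    have hm : AEMeasurable (fun ω => Real.arctan (ζx ω)) P :=
      Real.continuous_arctan.measurable.comp_aemeasurable ζx.aestronglyMeasurable.aemeasurable
    refine Integrable.mono' (integrable_const 2) hm.aestronglyMeasurable ?_
    refine ae_of_all _ fun ω => ?_
    rw [Real.norm_eq_abs, abs_le]
    constructor
    · nlinarith [Real.neg_pi_div_two_lt_arctan (ζx ω), Real.pi_le_four]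
    · nlinarith [Real.arctan_lt_pi_div_two (ζx ω), Real.pi_le_four]
  have hint1 : Integrable (fun ω => Real.arctan (ζx ω + M.d x v ω)) P := by
    have hm : AEMeasurable (fun ω => Real.arctan (ζx ω + M.d x v ω)) P :=
      Real.continuous_arctan.measurable.comp_aemeasurable
        (ζx.aestronglyMeasurable.aemeasurable.add
          (M.d x v).aestronglyMeasurable.aemeasurable)
    refine Integrable.mono' (integrable_const 2) hm.aestronglyMeasurable ?_
    refine ae_of_all _ fun ω => ?_
    rw [Real.norm_eq_abs, abs_le]
    constructor
    · nlinarith [Real.neg_pi_div_two_lt_arctan (ζx ω + M.d x v ω), Real.pi_le_four]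
    · nlinarith [Real.arctan_lt_pi_div_two (ζx ω + M.d x v ω), Real.pi_le_four]
  have hFx : ekF φ x = ∫ ω, Real.arctan (ζx ω) ∂P := by
    refine integral_congr_ae ?_
    filter_upwards [hζx] with ω h1
    unfold ekU
    rw [← h1, EReal.toReal_coe]
  have hle1 : ∫ ω, Real.arctan (ζx ω + M.d x v ω) ∂P ≤ ekF φ v := by
    refine integral_mono_ae hint1 (ekInt φ v) ?_
    filter_upwards [hprec_xv, hζx, hζv] with ω h1 h2 h3
    rw [← h2, ← h3, ← EReal.coe_add] at h1
    have h4 : ζx ω + M.d x v ω ≤ ζv ω := EReal.coe_le_coe_iff.1 h1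
    unfold ekU
    rw [← h3, EReal.toReal_coe]
    exact Real.arctan_strictMono.monotone h4
  have hle2 : ∀ᵐ ω ∂P, Real.arctan (ζx ω) ≤ Real.arctan (ζx ω + M.d x v ω) := by
    filter_upwards [M.d_nonneg x v] with ω h1
    exact Real.arctan_strictMono.monotone (by linarith)
  have hnn : 0 ≤ᵐ[P] fun ω => Real.arctan (ζx ω + M.d x v ω) - Real.arctan (ζx ω) := by
    filter_upwards [hle2] with ω h1
    simpa using sub_nonneg.2 h1
  have hzint : ∫ ω, (Real.arctan (ζx ω + M.d x v ω) - Real.arctan (ζx ω)) ∂P = 0 := by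
    refine le_antisymm ?_ (integral_nonneg_of_ae hnn)
    rw [integral_sub hint1 hint2]
    linarith [hle1, hFvx, hFx.symm.le, hFx.le]
  have hzero := (integral_eq_zero_iff_of_nonneg_ae hnn (hint1.sub hint2)).1 hzint
  have hd0 : ∀ᵐ ω ∂P, M.d x v ω = (0 : Ω → ℝ) ω := by
    filter_upwards [hzero] with ω h1
    simp only [Pi.sub_apply, Pi.zero_apply] at h1 ⊢
    have h2 : Real.arctan (ζx ω + M.d x v ω) = Real.arctan (ζx ω) := by linarith
    have h3 := Real.arctan_injective h2
    linarith
  have hdzero : M.d x v = 0 := by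
    refine AEEqFun.ext ?_
    filter_upwards [hd0, AEEqFun.coeFn_zero (α := Ω) (μ := P) (β := ℝ)] with ω h1 h2
    rw [h1, h2]
  exact hxv ((M.d_eq_zero_iff x v).1 hdzero)

end GYY
end

section
/- Caristi's fixed point theorem on a d_{ε,λ}-complete RM space: Let (E,d) be a d_{ε,λ}-complete random metric space with base (Ω,𝓕,P), φ : E → L̄⁰(𝓕) a proper, 𝒯_{ε,λ}-lower semicontinuous function which is bounded from below, and T : E → E a mapping such that φ(Tu) + d(Tu,u) ≤ φ(u) for all u ∈ E. Then T has a fixed point. -/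
open MeasureTheory ENNReal Set Filter

namespace GYY

variable {Ω : Type*} [MeasurableSpace Ω]

set_option maxHeartbeats 1000000

section CaristiAux

variable {Ω : Type*} [MeasurableSpace Ω]

private lemma meas_setOf_congr {P : Measure Ω} {p q : Ω → Prop}
    (h : ∀ᵐ ω ∂P, p ω ↔ q ω) : P {ω | p ω} = P {ω | q ω} :=
  measure_congr (Filter.eventuallyEq_set.2 h)

private lemma prob_lt_of_compl {P : Measure Ω} [IsProbabilityMeasure P] {S : Set Ω}
    (hS : MeasurableSet S) {lam : ℝ} (hlam : lam ≤ 1) (h : P Sᶜ < ENNReal.ofReal lam) :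
    ENNReal.ofReal (1 - lam) < P S := by
  have hfin : P Sᶜ ≠ ⊤ := measure_ne_top _ _
  have ht : (P Sᶜ).toReal < lam := (ENNReal.lt_ofReal_iff_toReal_lt hfin).1 h
  have hPS : P Sᶜ = 1 - P S := prob_compl_eq_one_sub hS
  have hle1 : P S ≤ 1 := prob_le_one
  have htc : (P Sᶜ).toReal = 1 - (P S).toReal := by
    rw [hPS, ENNReal.toReal_sub_of_le hle1 one_ne_top, ENNReal.toReal_one]
  rw [ENNReal.ofReal_lt_iff_lt_toReal (by linarith) (measure_ne_top _ _)]
  linarith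

private lemma compl_le_of_prob_lt {P : Measure Ω} [IsProbabilityMeasure P] {S : Set Ω}
    (hS : MeasurableSet S) {lam : ℝ} (hlam : lam ≤ 1)
    (h : ENNReal.ofReal (1 - lam) < P S) : P Sᶜ ≤ ENNReal.ofReal lam := by
  have hPS : (1 : ℝ) - lam < (P S).toReal :=
    (ENNReal.ofReal_lt_iff_lt_toReal (by linarith) (measure_ne_top _ _)).1 h
  have hPc : P Sᶜ = 1 - P S := prob_compl_eq_one_sub hS
  have hle1 : P S ≤ 1 := prob_le_one
  have htc : (P Sᶜ).toReal = 1 - (P S).toReal := by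
    rw [hPc, ENNReal.toReal_sub_of_le hle1 one_ne_top, ENNReal.toReal_one]
  calc P Sᶜ = ENNReal.ofReal (P Sᶜ).toReal := (ENNReal.ofReal_toReal (measure_ne_top _ _)).symm
    _ ≤ ENNReal.ofReal lam := ENNReal.ofReal_le_ofReal (by rw [htc]; linarith)

private lemma meas_ge_le {P : Measure Ω} [IsProbabilityMeasure P] {f : Ω → ℝ} {B c : ℝ}
    (hf0 : 0 ≤ᵐ[P] f) (hfi : Integrable f P) (hB : ∫ ω, f ω ∂P ≤ B) (hc : 0 < c) :
    P {ω | c ≤ f ω} ≤ ENNReal.ofReal (B / c) := by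
  have h := mul_meas_ge_le_integral_of_nonneg hf0 hfi c
  have ht : (P {ω | c ≤ f ω}).toReal ≤ B / c := by
    have h' : c * (P {ω | c ≤ f ω}).toReal ≤ ∫ ω, f ω ∂P := h
    rw [le_div_iff₀ hc]; nlinarith [h', hB]
  calc P {ω | c ≤ f ω} = ENNReal.ofReal (P {ω | c ≤ f ω}).toReal :=
        (ENNReal.ofReal_toReal (measure_ne_top _ _)).symm
    _ ≤ ENNReal.ofReal (B / c) := ENNReal.ofReal_le_ofReal ht

private lemma ae_le_of_meas_zero {P : Measure Ω} {f g : Ω → ℝ}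
    (h : ∀ ε : ℝ, 0 < ε → P {ω | g ω + ε ≤ f ω} = 0) : ∀ᵐ ω ∂P, f ω ≤ g ω := by
  rw [ae_iff]
  have hsub : {ω | ¬ f ω ≤ g ω} ⊆ ⋃ k : ℕ, {ω | g ω + 1/(k+1) ≤ f ω} := by
    intro ω hω
    simp only [Set.mem_setOf_eq, not_le] at hω
    obtain ⟨k, hk⟩ := exists_nat_one_div_lt (sub_pos.2 hω)
    exact Set.mem_iUnion.2 ⟨k, by simp only [Set.mem_setOf_eq]; linarith⟩
  exact measure_mono_null hsub (measure_iUnion_null fun k => h _ (by positivity))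

private lemma meas_zero_of_forall_lam {P : Measure Ω} [IsProbabilityMeasure P] {A : Set Ω}
    (h : ∀ lam ∈ Ioo (0:ℝ) 1, P A ≤ ENNReal.ofReal lam) : P A = 0 := by
  by_contra h0
  have ht : 0 < (P A).toReal := ENNReal.toReal_pos h0 (measure_ne_top _ _)
  set lam := min (P A).toReal 1 / 2 with hlamdef
  have hmem : lam ∈ Ioo (0:ℝ) 1 := by
    constructor
    · have h2 : 0 < min (P A).toReal 1 := lt_min ht one_pos
      simp only [hlamdef]; linarith
    · have : min (P A).toReal 1 ≤ 1 := min_le_right _ _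
      simp only [hlamdef]; linarith
  have hlt : ENNReal.ofReal lam < P A := by
    rw [ENNReal.ofReal_lt_iff_lt_toReal hmem.1.le (measure_ne_top _ _)]
    have h1 : min (P A).toReal 1 ≤ (P A).toReal := min_le_left _ _
    have h2 : 0 < min (P A).toReal 1 := lt_min ht one_pos
    simp only [hlamdef]; linarith
  exact absurd (h lam hmem) (not_le.2 hlt)

end CaristiAux


/-- Theorem 2.12: Caristi's fixed point theorem on a
`d_{ε,λ}`-complete random metric space. -/
theorem caristi_RM_EL
    {Ω : Type*} [MeasurableSpace Ω] {P : Measure Ω} [IsProbabilityMeasure P]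
    {E : Type*} (M : RMSpace P E) (hcomp : M.CompleteEL)
    (φ : E → L0e P)
    (hproper : ProperOn φ Set.univ) (hlsc : M.LscEL φ) (hbdd : BddBelowOn φ Set.univ)
    (T : E → E)
    (hT : ∀ u : E, ∀ᵐ ω ∂P, φ (T u) ω + (M.d (T u) u ω : EReal) ≤ φ u ω) :
    ∃ u : E, T u = u := by
  classical
  obtain ⟨hbot, x0, -, hx0top⟩ := hproper
  obtain ⟨ξ, hξ⟩ := hbdd
  set S : E → Set E := fun u => {v | ∀ᵐ ω ∂P, φ v ω + ((M.d v u ω : ℝ) : EReal) ≤ φ u ω}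
    with hSdef
  have hTmem : ∀ u, T u ∈ S u := hT
  have hrefl : ∀ u, u ∈ S u := by
    intro u
    have h0 : M.d u u = 0 := (M.d_eq_zero_iff u u).2 rfl
    have h1 : (M.d u u : Ω → ℝ) =ᵐ[P] 0 := h0 ▸ AEEqFun.coeFn_zero
    filter_upwards [h1] with ω hω
    simp only [hSdef, Set.mem_setOf_eq, hω]
    simp
  have htrans : ∀ u v z, v ∈ S u → z ∈ S v → z ∈ S u := by
    intro u v z hvu hzv
    filter_upwards [hvu, hzv, M.d_triangle z v u] with ω h1 h2 h3
    calc φ z ω + ((M.d z u ω : ℝ) : EReal)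
        ≤ φ z ω + ((M.d z v ω + M.d v u ω : ℝ) : EReal) :=
          add_le_add le_rfl (EReal.coe_le_coe_iff.2 h3)
      _ = (φ z ω + ((M.d z v ω : ℝ) : EReal)) + ((M.d v u ω : ℝ) : EReal) := by
          rw [EReal.coe_add, ← add_assoc]
      _ ≤ φ v ω + ((M.d v u ω : ℝ) : EReal) := add_le_add h2 le_rfl
      _ ≤ φ u ω := h1
  -- a.s. real-valuedness and bounds on S x0
  have hreal : ∀ y ∈ S x0, ∀ᵐ ω ∂P,
      (φ y ω ≠ ⊥ ∧ φ y ω ≠ ⊤) ∧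
      (ξ ω ≤ (φ y ω).toReal ∧ (φ y ω).toReal ≤ (φ x0 ω).toReal) := by
    intro y hy
    filter_upwards [hy, hbot y trivial, hx0top, hξ y trivial, M.d_nonneg y x0]
      with ω h1 h2 h3 h4 h5
    have hle : φ y ω ≤ φ x0 ω := by
      refine le_trans ?_ h1
      calc φ y ω = φ y ω + 0 := (add_zero _).symm
        _ ≤ φ y ω + ((M.d y x0 ω : ℝ) : EReal) := by
            refine add_le_add le_rfl ?_
            exact_mod_cast h5
    have hnt : φ y ω ≠ ⊤ := (lt_of_le_of_lt hle h3).ne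
    have hnb : φ y ω ≠ ⊥ := h2.ne'
    refine ⟨⟨hnb, hnt⟩, ?_, ?_⟩
    · have := EReal.toReal_le_toReal h4 (EReal.coe_ne_bot _) hnt
      simpa using this
    · exact EReal.toReal_le_toReal hle hnb h3.ne
  -- the weight
  set wfun : Ω → ℝ := fun ω => (1 + |ξ ω| + |(φ x0 ω).toReal|)⁻¹ with hwdef
  have hwpos : ∀ ω, 0 < wfun ω := fun ω => by
    simp only [hwdef]; positivity
  have hwmeas : Measurable wfun := by
    apply Measurable.inv
    exact (measurable_const.add ξ.stronglyMeasurable.measurable.abs).add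
      (measurable_ereal_toReal.comp (φ x0).stronglyMeasurable.measurable).abs
  have hwbound : ∀ y ∈ S x0, ∀ᵐ ω ∂P, |wfun ω * (φ y ω).toReal| ≤ 1 := by
    intro y hy
    filter_upwards [hreal y hy] with ω hω
    obtain ⟨-, hlo, hhi⟩ := hω
    have habsξ : -(|ξ ω| + |(φ x0 ω).toReal|) ≤ (φ y ω).toReal ∧
        (φ y ω).toReal ≤ |ξ ω| + |(φ x0 ω).toReal| := by
      constructor
      · have := neg_abs_le (ξ ω); have := abs_nonneg ((φ x0 ω).toReal); linarith
      · have := le_abs_self ((φ x0 ω).toReal); have := abs_nonneg (ξ ω); linarith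
    have habs : |(φ y ω).toReal| ≤ |ξ ω| + |(φ x0 ω).toReal| := abs_le.2 habsξ
    have hpos : (0:ℝ) < 1 + |ξ ω| + |(φ x0 ω).toReal| := by positivity
    rw [abs_mul, abs_of_pos (hwpos ω)]
    have hcancel : wfun ω * (1 + |ξ ω| + |(φ x0 ω).toReal|) = 1 := by
      simp only [hwdef]; field_simp
    have hmul := mul_le_mul_of_nonneg_left (by linarith : |(φ y ω).toReal| ≤
      1 + |ξ ω| + |(φ x0 ω).toReal|) (hwpos ω).le
    linarith
  have hφmeas : ∀ y, AEStronglyMeasurable (fun ω => wfun ω * (φ y ω).toReal) P := fun y =>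
    (hwmeas.mul (measurable_ereal_toReal.comp (φ y).stronglyMeasurable.measurable)).aestronglyMeasurable
  have hint : ∀ y ∈ S x0, Integrable (fun ω => wfun ω * (φ y ω).toReal) P := by
    intro y hy
    refine Integrable.mono' (integrable_const 1) (hφmeas y) ?_
    filter_upwards [hwbound y hy] with ω h
    rw [Real.norm_eq_abs]
    exact h
  set Φ : E → ℝ := fun y => ∫ ω, wfun ω * (φ y ω).toReal ∂P with hΦdef
  have hΦlb : ∀ y ∈ S x0, -1 ≤ Φ y := by
    intro y hy
    have h := integral_mono_ae (integrable_const (-1)) (hint y hy) ?_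
    · simpa using h
    · filter_upwards [hwbound y hy] with ω h
      exact (abs_le.1 h).1
  -- the key integral inequality
  have hkey : ∀ y ∈ S x0, ∀ z ∈ S y,
      Integrable (fun ω => wfun ω * M.d z y ω) P ∧
      (0 ≤ᵐ[P] fun ω => wfun ω * M.d z y ω) ∧
      ∫ ω, wfun ω * M.d z y ω ∂P ≤ Φ y - Φ z := by
    intro y hy z hz
    have hzSS : z ∈ S x0 := htrans _ _ _ hy hz
    have hpt : ∀ᵐ ω ∂P, 0 ≤ wfun ω * M.d z y ω ∧
        wfun ω * M.d z y ω ≤ wfun ω * (φ y ω).toReal - wfun ω * (φ z ω).toReal := by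
      filter_upwards [hz, hreal y hy, hreal z hzSS, M.d_nonneg z y] with ω h1 h2 h3 h4
      have hyeq : φ y ω = (((φ y ω).toReal : ℝ) : EReal) := (EReal.coe_toReal h2.1.2 h2.1.1).symm
      have hzeq : φ z ω = (((φ z ω).toReal : ℝ) : EReal) := (EReal.coe_toReal h3.1.2 h3.1.1).symm
      rw [hzeq, hyeq, ← EReal.coe_add, EReal.coe_le_coe_iff] at h1
      constructor
      · exact mul_nonneg (hwpos ω).le h4
      · have := mul_le_mul_of_nonneg_left (by linarith : M.d z y ω ≤
          (φ y ω).toReal - (φ z ω).toReal) (hwpos ω).le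
        rw [mul_sub] at this
        linarith
    have hmeasd : AEStronglyMeasurable (fun ω => wfun ω * M.d z y ω) P :=
      (hwmeas.mul (M.d z y).stronglyMeasurable.measurable).aestronglyMeasurable
    have hintd : Integrable (fun ω => wfun ω * M.d z y ω) P := by
      refine Integrable.mono' ((hint y hy).sub (hint z hzSS)) hmeasd ?_
      filter_upwards [hpt] with ω h
      rw [Real.norm_eq_abs, abs_of_nonneg h.1]
      exact h.2
    refine ⟨hintd, hpt.mono fun ω h => h.1, ?_⟩
    have h := integral_mono_ae hintd ((hint y hy).sub (hint z hzSS)) (hpt.mono fun ω h => h.2)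
    rw [show ((fun ω => wfun ω * (φ y ω).toReal) - fun ω => wfun ω * (φ z ω).toReal) =
      (fun ω => wfun ω * (φ y ω).toReal - wfun ω * (φ z ω).toReal) from rfl] at h
    rwa [integral_sub (hint y hy) (hint z hzSS)] at h
  have hΦmono : ∀ y ∈ S x0, ∀ z ∈ S y, Φ z ≤ Φ y := by
    intro y hy z hz
    obtain ⟨h1, h2, h3⟩ := hkey y hy z hz
    have := integral_nonneg_of_ae h2
    linarith
  have hbddimg : ∀ u ∈ S x0, BddBelow (Φ '' S u) := by
    intro u hu
    refine ⟨-1, ?_⟩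
    rintro b ⟨z, hzu, rfl⟩
    exact hΦlb z (htrans _ _ _ hu hzu)
  -- recursive construction of the minimizing sequence
  have hstep : ∀ (n : ℕ) (u : {u // u ∈ S x0}), ∃ v : {v // v ∈ S x0},
      v.1 ∈ S u.1 ∧ Φ v.1 < sInf (Φ '' S u.1) + (1/2)^n := by
    intro n u
    have hne : (Φ '' S u.1).Nonempty := ⟨Φ u.1, u.1, hrefl u.1, rfl⟩
    have hlt : sInf (Φ '' S u.1) < sInf (Φ '' S u.1) + (1/2:ℝ)^n :=
      lt_add_of_pos_right _ (by positivity)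
    obtain ⟨b, ⟨v, hv, rfl⟩, hblt⟩ := exists_lt_of_csInf_lt hne hlt
    exact ⟨⟨v, htrans _ _ _ u.2 hv⟩, hv, hblt⟩
  choose f hf1 hf2 using hstep
  obtain ⟨x, hx0eq, hxmem, hxstep, hxinf⟩ : ∃ x : ℕ → E, x 0 = x0 ∧ (∀ n, x n ∈ S x0) ∧
      (∀ n, x (n+1) ∈ S (x n)) ∧ ∀ n, Φ (x (n+1)) < sInf (Φ '' S (x n)) + (1/2)^n := by
    refine ⟨fun n => ((Nat.rec ⟨x0, hrefl x0⟩ (fun k ih => f k ih) n :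
      {u // u ∈ S x0})).1, rfl, fun n => (Nat.rec ⟨x0, hrefl x0⟩ (fun k ih => f k ih) n :
      {u // u ∈ S x0}).2, fun n => hf1 n _, fun n => hf2 n _⟩
  have hchain : ∀ n m, n ≤ m → x m ∈ S (x n) := by
    intro n m h
    induction m, h using Nat.le_induction with
    | base => exact hrefl (x n)
    | succ m hm ih => exact htrans _ _ _ ih (hxstep m)
  have hC : ∀ n m, n + 1 ≤ m → ∫ ω, wfun ω * M.d (x m) (x (n+1)) ω ∂P ≤ (1/2)^n := by
    intro n m hnm
    have h1 := (hkey (x (n+1)) (hxmem _) (x m) (hchain (n+1) m hnm)).2.2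
    have h2 : sInf (Φ '' S (x n)) ≤ Φ (x m) :=
      csInf_le (hbddimg _ (hxmem n)) ⟨x m, hchain n m (by omega), rfl⟩
    linarith [hxinf n]
  -- the sequence is Cauchy in the (ε,λ)-topology
  have hcauchy : M.CauchySeqEL x := by
    intro ε hε lam hlam
    obtain ⟨hlam0, hlam1⟩ := hlam
    -- find a lower cutoff for the weight
    set A : ℕ → Set Ω := fun k => {ω | wfun ω < 1/((k:ℝ)+1)} with hAdef
    have hAmeas : ∀ k, MeasurableSet (A k) := fun k =>
      measurableSet_lt hwmeas measurable_const
    have hiZ : (⋂ k : ℕ, A k) = ∅ := by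
      ext ω
      simp only [hAdef, Set.mem_iInter, Set.mem_setOf_eq, Set.mem_empty_iff_false, iff_false,
        not_forall, not_lt]
      obtain ⟨k, hk⟩ := exists_nat_one_div_lt (hwpos ω)
      exact ⟨k, hk.le⟩
    have hanti : Antitone A := by
      intro i j hij ω hω
      simp only [hAdef, Set.mem_setOf_eq] at hω ⊢
      refine lt_of_lt_of_le hω (one_div_le_one_div_of_le (by positivity) ?_)
      have : (i:ℝ) ≤ (j:ℝ) := Nat.cast_le.2 hij
      linarith
    have htend := tendsto_measure_iInter_atTop
      (fun k : ℕ => ((hAmeas k).nullMeasurableSet : NullMeasurableSet (A k) P)) hanti ⟨0, measure_ne_top _ _⟩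
    rw [hiZ, measure_empty] at htend
    have hofpos : (0:ℝ≥0∞) < ENNReal.ofReal (lam/2) := ENNReal.ofReal_pos.2 (by linarith)
    obtain ⟨k, hk⟩ := (htend.eventually (Iio_mem_nhds hofpos)).exists
    set c : ℝ := 1/((k:ℝ)+1) with hcdef
    have hcpos : 0 < c := by positivity
    -- pick N with (1/2)^N/(ε*c) < lam/2
    obtain ⟨N, hN⟩ := exists_pow_lt_of_lt_one (show (0:ℝ) < lam/2*(ε*c) by positivity)
      (by norm_num : (1/2:ℝ) < 1)
    -- main estimate for n ≤ m, both ≥ N+1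
    have hmain : ∀ m n, N + 1 ≤ n → n ≤ m →
        ENNReal.ofReal (1 - lam) < P {ω | M.d (x m) (x n) ω < ε} := by
      intro m n hn hnm
      obtain ⟨j, rfl⟩ : ∃ j, n = j + 1 := ⟨n - 1, by omega⟩
      obtain ⟨hintd, hnnd, hled⟩ := hkey (x (j+1)) (hxmem _) (x m) (hchain (j+1) m hnm)
      have hBled : ∫ ω, wfun ω * M.d (x m) (x (j+1)) ω ∂P ≤ (1/2)^N := by
        refine le_trans (hC j m hnm) ?_
        exact pow_le_pow_of_le_one (by norm_num) (by norm_num) (by omega)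
      have hMarkov : P {ω | ε * c ≤ wfun ω * M.d (x m) (x (j+1)) ω} ≤
          ENNReal.ofReal ((1/2)^N / (ε * c)) :=
        meas_ge_le hnnd hintd hBled (by positivity)
      -- a.e. inclusion of events
      have hincl : ∀ᵐ ω ∂P, ε ≤ M.d (x m) (x (j+1)) ω →
          (ε * c ≤ wfun ω * M.d (x m) (x (j+1)) ω ∨ ω ∈ A k) := by
        filter_upwards [M.d_nonneg (x m) (x (j+1))] with ω hd0 hdge
        by_cases hw : wfun ω < c
        · refine Or.inr ?_
          simp only [hAdef, Set.mem_setOf_eq]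
          rw [← hcdef]
          exact hw
        · left
          push_neg at hw
          calc ε * c = c * ε := mul_comm _ _
            _ ≤ wfun ω * M.d (x m) (x (j+1)) ω :=
              mul_le_mul hw hdge hε.le (hwpos ω).le
      have hcompl : P {ω | M.d (x m) (x (j+1)) ω < ε}ᶜ < ENNReal.ofReal lam := by
        have heq : {ω | M.d (x m) (x (j+1)) ω < ε}ᶜ = {ω | ε ≤ M.d (x m) (x (j+1)) ω} := by
          ext ω; simp [not_lt]
        rw [heq]
        calc P {ω | ε ≤ M.d (x m) (x (j+1)) ω}
            ≤ P ({ω | ε * c ≤ wfun ω * M.d (x m) (x (j+1)) ω} ∪ A k) := by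
              refine measure_mono_ae ?_
              filter_upwards [hincl] with ω h hmem
              exact h hmem
          _ ≤ P {ω | ε * c ≤ wfun ω * M.d (x m) (x (j+1)) ω} + P (A k) :=
              measure_union_le _ _
          _ < ENNReal.ofReal (lam/2) + ENNReal.ofReal (lam/2) := by
              refine ENNReal.add_lt_add_of_le_of_lt (measure_ne_top _ _)
                (hMarkov.trans (ENNReal.ofReal_le_ofReal ?_)) hk
              rw [div_le_iff₀ (by positivity)]
              nlinarith [hN]
          _ = ENNReal.ofReal lam := by
              rw [← ENNReal.ofReal_add (by linarith) (by linarith)]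
              norm_num
      refine prob_lt_of_compl ?_ hlam1.le hcompl
      exact (M.d (x m) (x (j+1))).stronglyMeasurable.measurable measurableSet_Iio
    refine ⟨N + 1, fun m hm n hn => ?_⟩
    rcases le_total n m with h | h
    · exact hmain m n hn h
    · rw [M.d_symm]
      exact hmain n m hm h
  obtain ⟨a, ha⟩ := hcomp x hcauchy
  -- real-valued versions of φ(x n) and their limit
  set rfn : ℕ → Ω → ℝ := fun n ω => (φ (x n) ω).toReal with hrfndef
  have hrmeas : ∀ n, Measurable (rfn n) := fun n =>
    measurable_ereal_toReal.comp (φ (x n)).stronglyMeasurable.measurable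
  set sfn : Ω → ℝ := fun ω => ⨅ n, rfn n ω with hsfndef
  have hsmeas : Measurable sfn := Measurable.iInf hrmeas
  set r : ℕ → L0 P := fun n => AEEqFun.mk (rfn n) (hrmeas n).aestronglyMeasurable with hrdef
  set s : L0 P := AEEqFun.mk sfn hsmeas.aestronglyMeasurable with hsdef
  have hn1 : ∀ n : ℕ, ∀ᵐ ω ∂P, rfn (n+1) ω ≤ rfn n ω ∧ ξ ω ≤ rfn n ω := by
    intro n
    filter_upwards [hxstep n, hreal (x n) (hxmem n), hreal (x (n+1)) (hxmem (n+1)),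
      M.d_nonneg (x (n+1)) (x n)] with ω h1 h2 h3 h4
    have heq1 : φ (x n) ω = ((rfn n ω : ℝ) : EReal) := (EReal.coe_toReal h2.1.2 h2.1.1).symm
    have heq2 : φ (x (n+1)) ω = ((rfn (n+1) ω : ℝ) : EReal) :=
      (EReal.coe_toReal h3.1.2 h3.1.1).symm
    rw [heq1, heq2, ← EReal.coe_add, EReal.coe_le_coe_iff] at h1
    exact ⟨by linarith, h2.2.1⟩
  have hmono_ae : ∀ᵐ ω ∂P, ∀ n, rfn (n+1) ω ≤ rfn n ω ∧ ξ ω ≤ rfn n ω := ae_all_iff.2 hn1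
  have hs_ae : ∀ᵐ ω ∂P, (∀ n, ξ ω ≤ sfn ω ∧ sfn ω ≤ rfn n ω) ∧
      Tendsto (fun n => rfn n ω) atTop (nhds (sfn ω)) := by
    filter_upwards [hmono_ae] with ω h
    have hbb : BddBelow (Set.range fun n => rfn n ω) := by
      refine ⟨ξ ω, ?_⟩
      rintro _ ⟨n, rfl⟩
      exact (h n).2
    have hanti : Antitone fun n => rfn n ω := antitone_nat_of_succ_le fun n => (h n).1
    exact ⟨fun n => ⟨le_ciInf fun m => (h m).2, ciInf_le hbb n⟩,
      tendsto_atTop_ciInf hanti hbb⟩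
  -- convergence in probability of r to s
  have hTIM : TendstoInMeasure P rfn atTop sfn :=
    tendstoInMeasure_of_tendsto_ae (fun n => (hrmeas n).aestronglyMeasurable)
      (hs_ae.mono fun ω h => h.2)
  have hrs : TendstoProb P r s := by
    intro ε hε lam hlam
    have h0 := hTIM (ENNReal.ofReal ε) (ENNReal.ofReal_pos.2 hε)
    obtain ⟨N, hN⟩ := Filter.eventually_atTop.1
      (h0.eventually (Iio_mem_nhds (ENNReal.ofReal_pos.2 hlam.1)))
    refine ⟨N, fun n hn => ?_⟩
    have heqm : P {ω | |r n ω - s ω| < ε} = P {ω | |rfn n ω - sfn ω| < ε} := by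
      refine meas_setOf_congr ?_
      filter_upwards [AEEqFun.coeFn_mk (rfn n) (hrmeas n).aestronglyMeasurable,
        AEEqFun.coeFn_mk sfn hsmeas.aestronglyMeasurable] with ω h1 h2
      rw [hrdef, hsdef] at *
      rw [h1, h2]
    rw [heqm]
    refine prob_lt_of_compl (measurableSet_lt ((hrmeas n).sub hsmeas).abs
      measurable_const) hlam.2.le ?_
    have hceq : {ω | |(rfn n - sfn) ω| < ε}ᶜ =
        {ω | ENNReal.ofReal ε ≤ edist (rfn n ω) (sfn ω)} := by
      ext ω
      simp only [Set.mem_compl_iff, Set.mem_setOf_eq, Pi.sub_apply, not_lt, edist_dist,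
        Real.dist_eq]
      rw [ENNReal.ofReal_le_ofReal_iff (abs_nonneg _)]
    rw [hceq]
    exact hN n hn
  -- lower semicontinuity
  have hφr : ∀ n, ∀ᵐ ω ∂P, φ (x n) ω ≤ (r n ω : EReal) := by
    intro n
    filter_upwards [hreal (x n) (hxmem n),
      AEEqFun.coeFn_mk (rfn n) (hrmeas n).aestronglyMeasurable] with ω h1 h2
    rw [hrdef] at *
    rw [h2]
    exact le_of_eq (EReal.coe_toReal h1.1.2 h1.1.1).symm
  have hφa : ∀ᵐ ω ∂P, φ a ω ≤ ((sfn ω : ℝ) : EReal) := by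
    have h := hlsc x r a s hφr ha hrs
    filter_upwards [h, AEEqFun.coeFn_mk sfn hsmeas.aestronglyMeasurable] with ω h1 h2
    rw [hsdef] at *
    rw [← h2]
    exact h1
  -- a.s. real-valuedness at a
  have hareal : ∀ᵐ ω ∂P, φ a ω = (((φ a ω).toReal : ℝ) : EReal) ∧ (φ a ω).toReal ≤ sfn ω := by
    filter_upwards [hφa, hbot a trivial] with ω h1 h2
    have hnt : φ a ω ≠ ⊤ := (lt_of_le_of_lt h1 (EReal.coe_lt_top _)).ne
    refine ⟨(EReal.coe_toReal hnt h2.ne').symm, ?_⟩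
    have := EReal.toReal_le_toReal h1 h2.ne' (EReal.coe_ne_top _)
    simpa using this
  -- the limit point is below the whole chain
  have hdan : ∀ n, ∀ᵐ ω ∂P, M.d a (x n) ω ≤ rfn n ω - sfn ω := by
    intro n
    refine ae_le_of_meas_zero fun ε hε => ?_
    refine meas_zero_of_forall_lam fun lam hlam => ?_
    obtain ⟨N, hN⟩ := ha ε hε lam hlam
    set m := max n N with hmdef
    have hm := hN m (le_max_right _ _)
    have hdm : P {ω | M.d (x m) a ω < ε}ᶜ ≤ ENNReal.ofReal lam := by
      refine compl_le_of_prob_lt ?_ hlam.2.le hm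
      exact (M.d (x m) a).stronglyMeasurable.measurable measurableSet_Iio
    refine le_trans (measure_mono_ae ?_) hdm
    have hsymm : M.d a (x m) = M.d (x m) a := M.d_symm a (x m)
    have hdxmn : ∀ᵐ ω ∂P, M.d (x m) (x n) ω ≤ rfn n ω - rfn m ω := by
      filter_upwards [hchain n m (le_max_left _ _), hreal (x n) (hxmem n),
        hreal (x m) (hxmem m)] with ω h1 h2 h3
      have heq1 : φ (x n) ω = ((rfn n ω : ℝ) : EReal) := (EReal.coe_toReal h2.1.2 h2.1.1).symm
      have heq2 : φ (x m) ω = ((rfn m ω : ℝ) : EReal) := (EReal.coe_toReal h3.1.2 h3.1.1).symm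
      rw [heq1, heq2, ← EReal.coe_add, EReal.coe_le_coe_iff] at h1
      linarith
    filter_upwards [M.d_triangle a (x m) (x n), hdxmn, hs_ae] with ω h1 h2 h3
    intro hω
    have hω' : rfn n ω - sfn ω + ε ≤ M.d a (x n) ω := hω
    have h4 : sfn ω ≤ rfn m ω := (h3.1 m).2
    rw [hsymm] at h1
    refine Set.mem_compl fun hc => ?_
    have hc' : M.d (x m) a ω < ε := hc
    linarith [hω']
  have hamem : ∀ n, a ∈ S (x n) := by
    intro n
    filter_upwards [hareal, hdan n, hreal (x n) (hxmem n)] with ω h1 h2 h3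
    calc φ a ω + ((M.d a (x n) ω : ℝ) : EReal)
        = (((φ a ω).toReal + M.d a (x n) ω : ℝ) : EReal) := by
          conv_lhs => rw [h1.1]
          rw [EReal.coe_add]
      _ ≤ ((rfn n ω : ℝ) : EReal) := EReal.coe_le_coe_iff.2 (by
          have := h1.2
          linarith [h2])
      _ = φ (x n) ω := EReal.coe_toReal h3.1.2 h3.1.1
  -- conclusion
  have hTamem : ∀ n, T a ∈ S (x n) := fun n => htrans _ _ _ (hamem n) (hTmem a)
  have haSS : a ∈ S x0 := hx0eq ▸ hamem 0
  have hΦaTa : Φ a ≤ Φ (T a) := by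
    refine le_of_forall_pos_lt_add fun ε hε => ?_
    obtain ⟨n, hn⟩ := exists_pow_lt_of_lt_one hε (by norm_num : (1/2:ℝ) < 1)
    calc Φ a ≤ Φ (x (n+1)) := hΦmono (x (n+1)) (hxmem (n+1)) a (hamem (n+1))
      _ < sInf (Φ '' S (x n)) + (1/2)^n := hxinf n
      _ ≤ Φ (T a) + (1/2)^n :=
          add_le_add (csInf_le (hbddimg _ (hxmem n)) ⟨T a, hTamem n, rfl⟩) le_rfl
      _ < Φ (T a) + ε := by linarith
  obtain ⟨hint2, hnn2, hle2⟩ := hkey a haSS (T a) (hTmem a)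
  have hzero : ∫ ω, wfun ω * M.d (T a) a ω ∂P = 0 :=
    le_antisymm (by linarith) (integral_nonneg_of_ae hnn2)
  have hae0 : (fun ω => wfun ω * M.d (T a) a ω) =ᵐ[P] 0 :=
    (integral_eq_zero_iff_of_nonneg_ae hnn2 hint2).1 hzero
  have hdz : M.d (T a) a = 0 := by
    refine AEEqFun.ext ?_
    filter_upwards [hae0, (AEEqFun.coeFn_zero : ((0 : L0 P) : Ω → ℝ) =ᵐ[P] 0)] with ω h1 h2
    rw [h2]
    have h1' : wfun ω * M.d (T a) a ω = 0 := h1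
    rcases mul_eq_zero.1 h1' with h | h
    · exact absurd h (hwpos ω).ne'
    · exact h
  exact ⟨a, (M.d_eq_zero_iff (T a) a).1 hdz⟩
end GYY
end
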